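/- arXiv:1207.2030 — 7 statements merged into one kernel-verified Lean document; each statement's English description precedes it below -/
import Mathlib

section
/- Let (Ω, Υ, μ) be a measure space, ω₁, ω₂ : Ω → [0,∞) two μ-measurable weights, and 0 < p < ∞. Suppose Φ : I₁ → [0,∞) and Ψ : I₂ → [0,∞) are concave functions on open intervals I₁, I₂ with ω₁(x) ∈ I₁ and ω₂(x) ∈ I₂ for a.e. x, and 1 ≤ Φ(ω₁(x)) Ψ(ω₂(x)) for a.e. x ∈ Ω. Then for every f ∈ Lᵖ(Ω, μ) ∩ Lᵖ(Ω, ω₁ dμ) ∩ Lᵖ(Ω, ω₂ dμ) with f ≢ 0, 1 ≤ Φ( (∫_Ω |f|ᵖ ω₁ dμ) / ‖f‖ᵖ_{Lᵖ(μ)} ) · Ψ( (∫_Ω |f|ᵖ ω₂ dμ) / ‖f‖ᵖ_{Lᵖ(μ)} ). -/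
open Set Function MeasureTheory Filter

/-- Supporting line for a concave function at an interior point. -/
lemma exists_supporting_line {I : Set ℝ} (hI : IsOpen I) {Φ : ℝ → ℝ}
    (hΦ : ConcaveOn ℝ I Φ) {c : ℝ} (hc : c ∈ I) :
    ∃ b : ℝ, ∀ t ∈ I, Φ t ≤ Φ c + b * (t - c) := by
  obtain ⟨ε, hε, hball⟩ := Metric.isOpen_iff.1 hI c hc
  have hd : c + ε / 2 ∈ I := by
    apply hball
    rw [Metric.mem_ball, Real.dist_eq, show c + ε / 2 - c = ε / 2 by ring,
      abs_of_nonneg (by linarith : (0:ℝ) ≤ ε / 2)]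
    linarith
  have hs₀ : c - ε / 2 ∈ I := by
    apply hball
    rw [Metric.mem_ball, Real.dist_eq, show c - ε / 2 - c = -(ε / 2) by ring, abs_neg,
      abs_of_nonneg (by linarith : (0:ℝ) ≤ ε / 2)]
    linarith
  set S : Set ℝ := (fun t => (Φ t - Φ c) / (t - c)) '' {t | t ∈ I ∧ c < t} with hS
  have hSne : S.Nonempty := ⟨_, ⟨c + ε / 2, ⟨hd, by linarith⟩, rfl⟩⟩
  have hub : ∀ s ∈ I, s < c → ∀ y ∈ S, y ≤ (Φ c - Φ s) / (c - s) := by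
    rintro s hs hsc y ⟨t, ⟨ht, hct⟩, rfl⟩
    exact hΦ.slope_anti_adjacent hs ht hsc hct
  have hbdd : BddAbove S := ⟨_, fun y hy => hub _ hs₀ (by linarith) y hy⟩
  refine ⟨sSup S, fun t ht => ?_⟩
  rcases lt_trichotomy t c with h | h | h
  · have hb : sSup S ≤ (Φ c - Φ t) / (c - t) := csSup_le hSne (hub t ht h)
    have h2 : sSup S * (c - t) ≤ Φ c - Φ t := by
      rw [← le_div_iff₀ (by linarith)]; exact hb
    nlinarith
  · simp [h]
  · have hb : (Φ t - Φ c) / (t - c) ≤ sSup S := le_csSup hbdd ⟨t, ⟨ht, h⟩, rfl⟩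
    have h2 : Φ t - Φ c ≤ sSup S * (t - c) := by
      rw [← div_le_iff₀ (by linarith)]; exact hb
    linarith

/-- The weighted average of a function with values a.e. in an ord-connected set lies in it. -/
lemma avg_mem {Ω : Type*} [MeasurableSpace Ω] {μ : Measure Ω}
    {I : Set ℝ} (hIc : I.OrdConnected) {g ω : Ω → ℝ} (hg0 : ∀ x, 0 ≤ g x)
    (hgi : Integrable g μ) (hgωi : Integrable (fun x => g x * ω x) μ)
    (hmem : ∀ᵐ x ∂μ, ω x ∈ I) (hT : 0 < ∫ x, g x ∂μ) :
    (∫ x, g x * ω x ∂μ) / (∫ x, g x ∂μ) ∈ I := by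
  set T := ∫ x, g x ∂μ with hTdef
  set c := (∫ x, g x * ω x ∂μ) / T with hcdef
  have hcT : ∫ x, g x * ω x ∂μ = c * T := by rw [hcdef, div_mul_cancel₀ _ hT.ne']
  by_contra hc
  have hkey : ∀ (v : Ω → ℝ), (∀ᵐ x ∂μ, 0 ≤ g x * v x) → Integrable (fun x => g x * v x) μ →
      (∫ x, g x * v x ∂μ) = 0 → (∀ᵐ x ∂μ, v x ≠ 0) → False := by
    intro v hv hvi hvz hvne
    have h0 : (fun x => g x * v x) =ᵐ[μ] 0 :=
      (integral_eq_zero_iff_of_nonneg_ae hv hvi).1 hvz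
    have hg0' : g =ᵐ[μ] 0 := by
      filter_upwards [h0, hvne] with x hx hxne
      rcases mul_eq_zero.1 hx with h | h
      · exact h
      · exact absurd h hxne
    have : T = 0 := by
      rw [hTdef, integral_congr_ae hg0']; simp
    linarith
  rcases (em (∃ t ∈ I, t ≤ c)) with ⟨t₁, ht₁, h₁⟩ | h
  · rcases (em (∃ t ∈ I, c ≤ t)) with ⟨t₂, ht₂, h₂⟩ | h'
    · exact hc (hIc.out ht₁ ht₂ ⟨h₁, h₂⟩)
    · -- all t ∈ I satisfy t < c
      push_neg at h'
      refine hkey (fun x => c - ω x) ?_ ?_ ?_ ?_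
      · filter_upwards [hmem] with x hx
        exact mul_nonneg (hg0 x) (by linarith [h' _ hx])
      · have : (fun x => g x * (c - ω x)) = fun x => c * g x - g x * ω x := by
          funext x; ring
        rw [this]; exact (hgi.const_mul c).sub hgωi
      · have : (fun x => g x * (c - ω x)) = fun x => c * g x - g x * ω x := by
          funext x; ring
        rw [this, integral_sub (hgi.const_mul c) hgωi, integral_const_mul, hcT, ← hTdef]; ring
      · filter_upwards [hmem] with x hx
        have := h' _ hx; intro hcon; simp only [sub_eq_zero] at hcon; linarith
  · push_neg at h
    refine hkey (fun x => ω x - c) ?_ ?_ ?_ ?_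
    · filter_upwards [hmem] with x hx
      exact mul_nonneg (hg0 x) (by linarith [h _ hx])
    · have : (fun x => g x * (ω x - c)) = fun x => g x * ω x - c * g x := by
        funext x; ring
      rw [this]; exact hgωi.sub (hgi.const_mul c)
    · have : (fun x => g x * (ω x - c)) = fun x => g x * ω x - c * g x := by
        funext x; ring
      rw [this, integral_sub hgωi (hgi.const_mul c), integral_const_mul, hcT, ← hTdef]; ring
    · filter_upwards [hmem] with x hx
      have := h _ hx; intro hcon; simp only [sub_eq_zero] at hcon; linarith

/-- Main auxiliary lemma: the interpolation inequality for a general nonnegative weight `g`. -/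
lemma main_aux {Ω : Type*} [MeasurableSpace Ω] (μ : Measure Ω)
    (g ω₁ ω₂ : Ω → ℝ) (hg0 : ∀ x, 0 ≤ g x)
    (I₁ I₂ : Set ℝ) (hI₁ : IsOpen I₁) (hI₁c : I₁.OrdConnected)
    (hI₂ : IsOpen I₂) (hI₂c : I₂.OrdConnected)
    (Φ Ψ : ℝ → ℝ)
    (hΦ : ConcaveOn ℝ I₁ Φ) (hΨ : ConcaveOn ℝ I₂ Ψ)
    (hΦ0 : ∀ t ∈ I₁, 0 ≤ Φ t) (hΨ0 : ∀ t ∈ I₂, 0 ≤ Ψ t)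
    (hmem₁ : ∀ᵐ x ∂μ, ω₁ x ∈ I₁) (hmem₂ : ∀ᵐ x ∂μ, ω₂ x ∈ I₂)
    (hpt : ∀ᵐ x ∂μ, 1 ≤ Φ (ω₁ x) * Ψ (ω₂ x))
    (hg : Integrable g μ)
    (hg₁ : Integrable (fun x => g x * ω₁ x) μ)
    (hg₂ : Integrable (fun x => g x * ω₂ x) μ)
    (hT : 0 < ∫ x, g x ∂μ) :
    1 ≤ Φ ((∫ x, g x * ω₁ x ∂μ) / ∫ x, g x ∂μ) *
        Ψ ((∫ x, g x * ω₂ x ∂μ) / ∫ x, g x ∂μ) := by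
  set T := ∫ x, g x ∂μ with hTdef
  set c₁ := (∫ x, g x * ω₁ x ∂μ) / T with hc₁def
  set c₂ := (∫ x, g x * ω₂ x ∂μ) / T with hc₂def
  have hc₁T : ∫ x, g x * ω₁ x ∂μ = c₁ * T := by rw [hc₁def, div_mul_cancel₀ _ hT.ne']
  have hc₂T : ∫ x, g x * ω₂ x ∂μ = c₂ * T := by rw [hc₂def, div_mul_cancel₀ _ hT.ne']
  have hc₁ : c₁ ∈ I₁ := avg_mem hI₁c hg0 hg hg₁ hmem₁ hT
  have hc₂ : c₂ ∈ I₂ := avg_mem hI₂c hg0 hg hg₂ hmem₂ hT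
  obtain ⟨b₁, hb₁⟩ := exists_supporting_line hI₁ hΦ hc₁
  obtain ⟨b₂, hb₂⟩ := exists_supporting_line hI₂ hΨ hc₂
  set A : Ω → ℝ := fun x => Φ c₁ + b₁ * (ω₁ x - c₁) with hAdef
  set B : Ω → ℝ := fun x => Ψ c₂ + b₂ * (ω₂ x - c₂) with hBdef
  have heqA : (fun x => g x * A x) = fun x => (Φ c₁ - b₁ * c₁) * g x + b₁ * (g x * ω₁ x) := by
    funext x; simp only [hAdef]; ring
  have heqB : (fun x => g x * B x) = fun x => (Ψ c₂ - b₂ * c₂) * g x + b₂ * (g x * ω₂ x) := by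
    funext x; simp only [hBdef]; ring
  have hiA : Integrable (fun x => g x * A x) μ := by
    rw [heqA]; exact (hg.const_mul _).add (hg₁.const_mul _)
  have hiB : Integrable (fun x => g x * B x) μ := by
    rw [heqB]; exact (hg.const_mul _).add (hg₂.const_mul _)
  have hIA : ∫ x, g x * A x ∂μ = Φ c₁ * T := by
    rw [heqA, integral_add (hg.const_mul _) (hg₁.const_mul _),
      integral_const_mul, integral_const_mul, hc₁T, ← hTdef]
    ring
  have hIB : ∫ x, g x * B x ∂μ = Ψ c₂ * T := by
    rw [heqB, integral_add (hg.const_mul _) (hg₂.const_mul _),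
      integral_const_mul, integral_const_mul, hc₂T, ← hTdef]
    ring
  -- key scalar inequality for each positive λ
  have key : ∀ l : ℝ, 0 < l → 2 ≤ l * Φ c₁ + Ψ c₂ / l := by
    intro l hl
    have hptwise : ∀ᵐ x ∂μ, 2 * g x ≤ g x * (l * A x + B x / l) := by
      filter_upwards [hmem₁, hmem₂, hpt] with x h1 h2 h3
      have hA : Φ (ω₁ x) ≤ A x := hb₁ _ h1
      have hB : Ψ (ω₂ x) ≤ B x := hb₂ _ h2
      have hA0 : 0 ≤ Φ (ω₁ x) := hΦ0 _ h1
      have hB0 : 0 ≤ Ψ (ω₂ x) := hΨ0 _ h2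
      have hAB : 1 ≤ A x * B x := by nlinarith
      have hApos : 0 < A x := by nlinarith
      have hBpos : 0 < B x := by nlinarith
      have key2 : 2 * l ≤ l ^ 2 * A x + B x := by
        nlinarith [sq_nonneg (l * A x - 1), hAB, hApos, mul_pos hApos hBpos]
      have h2l : 2 ≤ l * A x + B x / l := by
        have hcalc : (2 : ℝ) = 2 * l / l := by field_simp
        rw [hcalc]
        calc 2 * l / l ≤ (l ^ 2 * A x + B x) / l := by gcongr
          _ = l * A x + B x / l := by field_simp
      nlinarith [hg0 x]
    have heqR : (fun x => g x * (l * A x + B x / l))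
        = fun x => l * (g x * A x) + (1 / l) * (g x * B x) := by
      funext x; field_simp
    have hiR : Integrable (fun x => g x * (l * A x + B x / l)) μ := by
      rw [heqR]; exact (hiA.const_mul _).add (hiB.const_mul _)
    have hint : 2 * T ≤ l * (Φ c₁ * T) + (1 / l) * (Ψ c₂ * T) := by
      have h := integral_mono_ae (hg.const_mul 2) hiR hptwise
      rw [integral_const_mul, ← hTdef] at h
      rw [heqR, integral_add (hiA.const_mul _) (hiB.const_mul _),
        integral_const_mul, integral_const_mul, hIA, hIB] at h
      exact h
    have hΦΨ : l * Φ c₁ + Ψ c₂ / l = (l * (Φ c₁ * T) + (1 / l) * (Ψ c₂ * T)) / T := by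
      field_simp
    rw [hΦΨ]
    rw [le_div_iff₀ hT]
    linarith
  have hΦc₁0 : 0 ≤ Φ c₁ := hΦ0 _ hc₁
  have hΨc₂0 : 0 ≤ Ψ c₂ := hΨ0 _ hc₂
  have hΦpos : 0 < Φ c₁ := by
    rcases hΦc₁0.lt_or_eq with h | h
    · exact h
    · exfalso
      have hk := key (Ψ c₂ + 1) (by linarith)
      rw [← h] at hk
      have : Ψ c₂ / (Ψ c₂ + 1) < 1 := by
        rw [div_lt_one (by linarith)]; linarith
      linarith
  have hk := key (1 / Φ c₁) (by positivity)
  have h1 : (1 / Φ c₁) * Φ c₁ = 1 := by field_simp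
  have h2 : Ψ c₂ / (1 / Φ c₁) = Ψ c₂ * Φ c₁ := by field_simp
  rw [h1, h2] at hk
  nlinarith

/-- Generalized Hölder / interpolation inequality: if `Φ`, `Ψ` are nonnegative concave
functions on open intervals containing a.e. the values of the weights `ω₁`, `ω₂`, and
`1 ≤ Φ(ω₁ x) Ψ(ω₂ x)` a.e., then for every `f ∈ Lᵖ(μ) ∩ Lᵖ(ω₁ dμ) ∩ Lᵖ(ω₂ dμ)`, `f ≢ 0`,
`1 ≤ Φ((∫ |f|ᵖ ω₁ dμ)/∫ |f|ᵖ dμ) · Ψ((∫ |f|ᵖ ω₂ dμ)/∫ |f|ᵖ dμ)`. -/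
theorem stmt2 {Ω : Type*} [MeasurableSpace Ω] (μ : Measure Ω)
    (ω₁ ω₂ : Ω → ℝ) (hω₁m : Measurable ω₁) (hω₂m : Measurable ω₂)
    (hω₁0 : ∀ x, 0 ≤ ω₁ x) (hω₂0 : ∀ x, 0 ≤ ω₂ x)
    (p : ℝ) (hp : 0 < p)
    (I₁ I₂ : Set ℝ) (hI₁ : IsOpen I₁) (hI₁c : I₁.OrdConnected)
    (hI₂ : IsOpen I₂) (hI₂c : I₂.OrdConnected)
    (Φ Ψ : ℝ → ℝ)
    (hΦ : ConcaveOn ℝ I₁ Φ) (hΨ : ConcaveOn ℝ I₂ Ψ)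
    (hΦ0 : ∀ t ∈ I₁, 0 ≤ Φ t) (hΨ0 : ∀ t ∈ I₂, 0 ≤ Ψ t)
    (hmem₁ : ∀ᵐ x ∂μ, ω₁ x ∈ I₁) (hmem₂ : ∀ᵐ x ∂μ, ω₂ x ∈ I₂)
    (hpt : ∀ᵐ x ∂μ, 1 ≤ Φ (ω₁ x) * Ψ (ω₂ x))
    (f : Ω → ℝ) (hfm : AEStronglyMeasurable f μ)
    (hf : Integrable (fun x => |f x| ^ p) μ)
    (hf₁ : Integrable (fun x => |f x| ^ p * ω₁ x) μ)
    (hf₂ : Integrable (fun x => |f x| ^ p * ω₂ x) μ)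
    (hne : ¬ f =ᵐ[μ] 0) :
    1 ≤ Φ ((∫ x, |f x| ^ p * ω₁ x ∂μ) / ∫ x, |f x| ^ p ∂μ) *
        Ψ ((∫ x, |f x| ^ p * ω₂ x ∂μ) / ∫ x, |f x| ^ p ∂μ) := by
  have hg0 : ∀ x, 0 ≤ |f x| ^ p := fun x => Real.rpow_nonneg (abs_nonneg _) _
  have hT : 0 < ∫ x, |f x| ^ p ∂μ := by
    rw [integral_pos_iff_support_of_nonneg hg0 hf]
    have hsupp : support (fun x => |f x| ^ p) = {x | f x ≠ 0} := by
      ext x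
      simp only [mem_support, Set.mem_setOf_eq]
      constructor
      · intro h hfx
        exact h (by rw [hfx, abs_zero, Real.zero_rpow hp.ne'])
      · intro h hcon
        exact h (abs_eq_zero.1 ((Real.rpow_eq_zero (abs_nonneg _) hp.ne').1 hcon))
    rw [hsupp, pos_iff_ne_zero]
    intro hμ0
    apply hne
    have : ∀ᵐ x ∂μ, f x = 0 := by
      rw [MeasureTheory.ae_iff]
      simpa using hμ0
    exact this
  exact main_aux μ (fun x => |f x| ^ p) ω₁ ω₂ hg0 I₁ I₂ hI₁ hI₁c hI₂ hI₂c Φ Ψ hΦ hΨ hΦ0 hΨ0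
    hmem₁ hmem₂ hpt hf hf₁ hf₂ hT
end

section
/- Let m ∈ [0,∞), 0 < M ≤ ∞, p ∈ [1,∞), and f : (m,∞) → (0,M) a nonincreasing convex function with f(t) → M as t → m⁺. Define φ_p(t) = f(t)/tᵖ for t > m. Then φ_p is convex and decreasing on (m,∞), its inverse φ_p⁻¹ : (0, M/mᵖ) → (m,∞) exists, and the function t ↦ 1/φ_p⁻¹(t) is concave and increasing on (0, M/mᵖ), with 1/φ_p⁻¹(t) → 0 as t → 0⁺. -/
open Set Function Filter Topology
open scoped ENNReal

lemma myConvexOn_congr {s : Set ℝ} {f g : ℝ → ℝ} (hf : ConvexOn ℝ s f)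
    (h : ∀ x ∈ s, f x = g x) : ConvexOn ℝ s g :=
  ⟨hf.1, fun x hx y hy a b ha hb hab => by
    rw [← h _ hx, ← h _ hy, ← h _ (hf.1 hx hy ha hb hab)]
    exact hf.2 hx hy ha hb hab⟩

lemma aux_inv_rpow_convex {q : ℝ} (hq : 0 ≤ q) :
    ConvexOn ℝ (Ioi (0:ℝ)) (fun x => (x ^ q)⁻¹) := by
  have h1 : ConvexOn ℝ (Ioi (0:ℝ)) (fun x => -(q * Real.log x)) := by
    refine myConvexOn_congr (strictConcaveOn_log_Ioi.concaveOn.smul hq).neg fun x _ => ?_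
    simp [smul_eq_mul]
  have h2 : ConvexOn ℝ (Ioi (0:ℝ)) (fun x => Real.exp (-(q * Real.log x))) :=
    ⟨h1.1, fun x hx y hy a b ha hb hab => by
      calc Real.exp (-(q * Real.log (a • x + b • y)))
          ≤ Real.exp (a • (-(q * Real.log x)) + b • (-(q * Real.log y))) :=
            Real.exp_le_exp.2 (h1.2 hx hy ha hb hab)
        _ ≤ a • Real.exp (-(q * Real.log x)) + b • Real.exp (-(q * Real.log y)) :=
            convexOn_exp.2 trivial trivial ha hb hab⟩
  refine myConvexOn_congr h2 fun x hx => ?_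
  rw [Real.rpow_def_of_pos hx, ← Real.exp_neg, mul_comm]

lemma aux_inv_rpow_anti {q : ℝ} (hq : 0 ≤ q) :
    AntitoneOn (fun x : ℝ => (x ^ q)⁻¹) (Ioi (0:ℝ)) := by
  intro x hx y hy hxy
  have h1 : (0:ℝ) < x ^ q := Real.rpow_pos_of_pos hx q
  exact inv_anti₀ h1 (Real.rpow_le_rpow (le_of_lt hx) hxy hq)

lemma aux_quot_convex {m q : ℝ} (hm : 0 ≤ m) (hq : 0 ≤ q) {f : ℝ → ℝ}
    (hf_conv : ConvexOn ℝ (Ioi m) f) (hf_anti : AntitoneOn f (Ioi m))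
    (hf_nonneg : ∀ t ∈ Ioi m, 0 ≤ f t) :
    ConvexOn ℝ (Ioi m) (fun t => f t / t ^ q) := by
  have hsub : Ioi m ⊆ Ioi (0:ℝ) := Ioi_subset_Ioi hm
  have hg_conv : ConvexOn ℝ (Ioi m) (fun x : ℝ => (x ^ q)⁻¹) :=
    (aux_inv_rpow_convex hq).subset hsub (convex_Ioi m)
  have hg_anti : AntitoneOn (fun x : ℝ => (x ^ q)⁻¹) (Ioi m) :=
    (aux_inv_rpow_anti hq).mono hsub
  have hg_nonneg : ∀ ⦃x⦄, x ∈ Ioi m → 0 ≤ (x ^ q)⁻¹ := fun x hx =>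
    inv_nonneg.2 (Real.rpow_nonneg (le_of_lt (hsub hx)) q)
  have := hf_conv.mul hg_conv (fun x hx => hf_nonneg x hx) hg_nonneg
    (hf_anti.monovaryOn hg_anti)
  refine myConvexOn_congr this fun x _ => ?_
  simp [Pi.mul_apply, div_eq_mul_inv]


/-- Lemma on weighted quotients: if `f : (m,∞) → (0,M)` is nonincreasing, convex, with
`f(t) → M` as `t → m⁺` and `f(t) → 0` at `∞`, and `p ≥ 1`, then `φ_p(t) = f(t)/tᵖ` is
convex and strictly decreasing on `(m,∞)`, maps `(m,∞)` bijectively onto `(0, M/mᵖ)`,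
and `t ↦ 1/φ_p⁻¹(t)` is concave, strictly increasing on `(0, M/mᵖ)` and tends to `0`
at `0⁺`.  (Convention: `M/mᵖ = ∞` if `m = 0` or `M = ∞`.) -/
theorem stmt3 (m : ℝ) (hm : 0 ≤ m) (M : ℝ≥0∞) (hM : 0 < M) (p : ℝ) (hp : 1 ≤ p)
    (f : ℝ → ℝ)
    (hf_pos : ∀ t ∈ Ioi m, 0 < f t ∧ ENNReal.ofReal (f t) < M)
    (hf_anti : AntitoneOn f (Ioi m))
    (hf_conv : ConvexOn ℝ (Ioi m) f)
    (hf_lim : Tendsto (fun t => ENNReal.ofReal (f t)) (nhdsWithin m (Ioi m)) (nhds M))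
    (hf_top : Tendsto f atTop (nhds 0)) :
    ConvexOn ℝ (Ioi m) (fun t => f t / t ^ p) ∧
    StrictAntiOn (fun t => f t / t ^ p) (Ioi m) ∧
    Set.BijOn (fun t => f t / t ^ p) (Ioi m)
      {s : ℝ | 0 < s ∧ ENNReal.ofReal s < M / ENNReal.ofReal (m ^ p)} ∧
    ConcaveOn ℝ {s : ℝ | 0 < s ∧ ENNReal.ofReal s < M / ENNReal.ofReal (m ^ p)}
      (fun s => 1 / Function.invFunOn (fun t => f t / t ^ p) (Ioi m) s) ∧
    StrictMonoOn (fun s => 1 / Function.invFunOn (fun t => f t / t ^ p) (Ioi m) s)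
      {s : ℝ | 0 < s ∧ ENNReal.ofReal s < M / ENNReal.ofReal (m ^ p)} ∧
    Tendsto (fun s => 1 / Function.invFunOn (fun t => f t / t ^ p) (Ioi m) s)
      (nhdsWithin 0 (Ioi 0)) (nhds 0) := by
  have hp0 : (0:ℝ) < p := lt_of_lt_of_le one_pos hp
  have hsub : Ioi m ⊆ Ioi (0:ℝ) := Ioi_subset_Ioi hm
  set φ : ℝ → ℝ := fun t => f t / t ^ p with hφdef
  set L : ℝ≥0∞ := M / ENNReal.ofReal (m ^ p) with hLdef
  set T : Set ℝ := {s : ℝ | 0 < s ∧ ENNReal.ofReal s < L} with hTdef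
  have hφpos : ∀ t ∈ Ioi m, 0 < φ t := fun t ht =>
    div_pos (hf_pos t ht).1 (Real.rpow_pos_of_pos (hsub ht) p)
  -- convexity
  have hconv : ConvexOn ℝ (Ioi m) φ :=
    aux_quot_convex hm hp0.le hf_conv hf_anti (fun t ht => (hf_pos t ht).1.le)
  -- strict antitonicity
  have hanti : StrictAntiOn φ (Ioi m) := by
    intro a ha b hb hab
    have ha0 : (0:ℝ) < a := hsub ha
    have h2 : (0:ℝ) < a ^ p := Real.rpow_pos_of_pos ha0 p
    have h1 : a ^ p < b ^ p := Real.rpow_lt_rpow ha0.le hab hp0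
    have hfb : 0 < f b := (hf_pos b hb).1
    show f b / b ^ p < f a / a ^ p
    calc f b / b ^ p < f b / a ^ p := div_lt_div_of_pos_left hfb h2 h1
      _ ≤ f a / a ^ p := by
          have hba := hf_anti ha hb hab.le
          gcongr
  -- maps into T
  have hmapsTo : MapsTo φ (Ioi m) T := by
    intro t ht
    have ht0 : (0:ℝ) < t := hsub ht
    refine ⟨hφpos t ht, ?_⟩
    rcases eq_top_or_lt_top M with hMt | hMt
    · rw [hLdef, hMt, ENNReal.top_div_of_ne_top ENNReal.ofReal_ne_top]
      exact ENNReal.ofReal_lt_top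
    rcases eq_or_lt_of_le hm with hm0 | hm0
    · rw [hLdef, ← hm0, Real.zero_rpow (ne_of_gt hp0), ENNReal.ofReal_zero,
        ENNReal.div_zero (ne_of_gt hM)]
      exact ENNReal.ofReal_lt_top
    · have hmp : (0:ℝ) < m ^ p := Real.rpow_pos_of_pos hm0 p
      have hMr : 0 < M.toReal := ENNReal.toReal_pos (ne_of_gt hM) (ne_of_lt hMt)
      have hft : f t < M.toReal := by
        have h := (hf_pos t ht).2
        rwa [ENNReal.ofReal_lt_iff_lt_toReal (hf_pos t ht).1.le (ne_of_lt hMt)] at h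
      have htp : m ^ p < t ^ p := Real.rpow_lt_rpow hm0.le ht hp0
      have hL_ne : L ≠ ⊤ := by
        rw [hLdef]
        exact (ENNReal.div_lt_top (ne_of_lt hMt) (ENNReal.ofReal_pos.2 hmp).ne').ne
      rw [ENNReal.ofReal_lt_iff_lt_toReal (hφpos t ht).le hL_ne, hLdef, ENNReal.toReal_div,
        ENNReal.toReal_ofReal hmp.le]
      show f t / t ^ p < M.toReal / m ^ p
      have hφt0 : (0:ℝ) < t ^ p := Real.rpow_pos_of_pos ht0 p
      calc f t / t ^ p < M.toReal / t ^ p := by gcongr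
        _ ≤ M.toReal / m ^ p := by gcongr
  -- tendsto 0 at top
  have hφ0 : Tendsto φ atTop (𝓝 0) := by
    have := hf_top.div_atTop (tendsto_rpow_atTop hp0)
    simpa using this
  -- for every s in T there is a point with large value
  have hbig : ∀ s ∈ T, ∃ a ∈ Ioi m, s < φ a := by
    intro s hs
    obtain ⟨hs0, hsL⟩ := hs
    rcases eq_or_lt_of_le hm with hm0 | hm0
    · -- m = 0
      have h1m : (1:ℝ) ∈ Ioi m := by rw [mem_Ioi, ← hm0]; norm_num
      have hf1 : 0 < f 1 := (hf_pos 1 h1m).1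
      set a : ℝ := min 1 (f 1 / s) / 2 with hadef
      have hmin : 0 < min 1 (f 1 / s) := lt_min one_pos (div_pos hf1 hs0)
      have ha0 : 0 < a := by rw [hadef]; positivity
      have ha1 : a ≤ 1 := by
        have h := min_le_left 1 (f 1 / s); rw [hadef]; linarith
      have haf : a < f 1 / s := by
        have h := min_le_right 1 (f 1 / s); rw [hadef]; linarith
      have ham : a ∈ Ioi m := by rw [mem_Ioi, ← hm0]; exact ha0
      refine ⟨a, ham, ?_⟩
      have hap : a ^ p ≤ a := by
        calc a ^ p ≤ a ^ (1:ℝ) := Real.rpow_le_rpow_of_exponent_ge ha0 ha1 hp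
          _ = a := Real.rpow_one a
      have hfa : f 1 ≤ f a := hf_anti ham h1m ha1
      have hap0 : 0 < a ^ p := Real.rpow_pos_of_pos ha0 p
      have hsa : s * a < f 1 := by
        rw [lt_div_iff₀ hs0] at haf; linarith [haf]
      show s < f a / a ^ p
      rw [lt_div_iff₀ hap0]
      have : s * a ^ p ≤ s * a := by nlinarith
      linarith
    · rcases eq_top_or_lt_top M with hMt | hMt
      · -- M = ⊤
        have h1 : ∀ᶠ t in 𝓝[>] m, ENNReal.ofReal (s * (m+1) ^ p) < ENNReal.ofReal (f t) := by
          apply hf_lim.eventually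
          apply eventually_gt_nhds
          rw [hMt]; exact ENNReal.ofReal_lt_top
        have h2 : Ioo m (m+1) ∈ 𝓝[>] m :=
          Ioo_mem_nhdsGT_of_mem ⟨le_refl m, lt_add_one m⟩
        obtain ⟨t, hts, ht2⟩ := (h1.and h2).exists
        have htm : t ∈ Ioi m := ht2.1
        have ht0 : (0:ℝ) < t := hsub htm
        refine ⟨t, htm, ?_⟩
        have hft : s * (m+1) ^ p < f t := by
          rwa [ENNReal.ofReal_lt_ofReal_iff (hf_pos t htm).1] at hts
        have htp : t ^ p < (m+1) ^ p := Real.rpow_lt_rpow ht0.le ht2.2 hp0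
        show s < f t / t ^ p
        rw [lt_div_iff₀ (Real.rpow_pos_of_pos ht0 p)]
        calc s * t ^ p < s * (m+1) ^ p := by gcongr
          _ < f t := hft
      · -- M < ⊤, m > 0
        have hmp : (0:ℝ) < m ^ p := Real.rpow_pos_of_pos hm0 p
        have hL_ne : L ≠ ⊤ := by
          rw [hLdef]
          exact (ENNReal.div_lt_top (ne_of_lt hMt) (ENNReal.ofReal_pos.2 hmp).ne').ne
        have hs' : s < M.toReal / m ^ p := by
          rw [ENNReal.ofReal_lt_iff_lt_toReal hs0.le hL_ne, hLdef, ENNReal.toReal_div,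
            ENNReal.toReal_ofReal hmp.le] at hsL
          exact hsL
        have hfreal : Tendsto f (𝓝[>] m) (𝓝 M.toReal) := by
          have h1 := (ENNReal.tendsto_toReal (ne_of_lt hMt)).comp hf_lim
          apply h1.congr'
          filter_upwards [self_mem_nhdsWithin] with t ht
          simp [Function.comp, ENNReal.toReal_ofReal (hf_pos t ht).1.le]
        have hrp : Tendsto (fun t : ℝ => t ^ p) (𝓝[>] m) (𝓝 (m ^ p)) := by
          have hc : ContinuousAt (fun t : ℝ => t ^ p) m :=
            Real.continuousAt_rpow_const m p (Or.inl (ne_of_gt hm0))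
          exact hc.tendsto.mono_left nhdsWithin_le_nhds
        have hφlim : Tendsto φ (𝓝[>] m) (𝓝 (M.toReal / m ^ p)) :=
          hfreal.div hrp (ne_of_gt hmp)
        have hev := (hφlim.eventually (eventually_gt_nhds hs')).and self_mem_nhdsWithin
        obtain ⟨t, hst, htm⟩ := hev.exists
        exact ⟨t, htm, hst⟩
  -- surjectivity
  have hcont : ContinuousOn φ (Ioi m) := hconv.continuousOn isOpen_Ioi
  have hsurj : SurjOn φ (Ioi m) T := by
    intro s hs
    obtain ⟨a, ham, has⟩ := hbig s hs
    have hev : ∀ᶠ t in atTop, φ t < s := hφ0.eventually (eventually_lt_nhds hs.1)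
    obtain ⟨b, hb1, hb2⟩ := (hev.and (eventually_ge_atTop a)).exists
    have hIcc : Icc a b ⊆ Ioi m := fun x hx => lt_of_lt_of_le ham hx.1
    have hmem : s ∈ Icc (φ b) (φ a) := ⟨hb1.le, has.le⟩
    obtain ⟨t, htab, hts⟩ := intermediate_value_Icc' hb2 (hcont.mono hIcc) hmem
    exact ⟨t, hIcc htab, hts⟩
  have hbij : BijOn φ (Ioi m) T := ⟨hmapsTo, hanti.injOn, hsurj⟩
  -- inverse function facts
  set g : ℝ → ℝ := invFunOn φ (Ioi m) with hgdef
  have hinv : InvOn g φ (Ioi m) T := hbij.invOn_invFunOn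
  have hg_mem : ∀ s ∈ T, g s ∈ Ioi m := fun s hs => hbij.surjOn.mapsTo_invFunOn hs
  have hg_eq : ∀ s ∈ T, φ (g s) = s := fun s hs => hinv.2 hs
  have hg_pos : ∀ s ∈ T, 0 < g s := fun s hs => hsub (hg_mem s hs)
  have hg_gt : ∀ s ∈ T, ∀ t ∈ Ioi m, s < φ t → t < g s := by
    intro s hs t ht hlt
    by_contra hcon
    push_neg at hcon
    rcases eq_or_lt_of_le hcon with h1 | h1
    · rw [← h1, hg_eq s hs] at hlt; exact lt_irrefl s hlt
    · have h2 := hanti (hg_mem s hs) ht h1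
      rw [hg_eq s hs] at h2
      exact absurd (h2.trans hlt) (lt_irrefl _)
  have hg_lt : ∀ s ∈ T, ∀ t ∈ Ioi m, φ t < s → g s < t := by
    intro s hs t ht hlt
    by_contra hcon
    push_neg at hcon
    rcases eq_or_lt_of_le hcon with h1 | h1
    · rw [h1, hg_eq s hs] at hlt; exact lt_irrefl s hlt
    · have h2 := hanti ht (hg_mem s hs) h1
      rw [hg_eq s hs] at h2
      exact absurd (hlt.trans h2) (lt_irrefl _)
  -- convexity of T
  have hTconv : Convex ℝ T := by
    rw [convex_iff_ordConnected]
    constructor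
    intro x hx y hy z hz
    exact ⟨lt_of_lt_of_le hx.1 hz.1,
      lt_of_le_of_lt (ENNReal.ofReal_le_ofReal hz.2) hy.2⟩
  -- the auxiliary convex function f₁
  have hf₁conv : ConvexOn ℝ (Ioi m) (fun t => f t / t ^ (p-1)) :=
    aux_quot_convex hm (by linarith) hf_conv hf_anti (fun t ht => (hf_pos t ht).1.le)
  have hrwφ : ∀ t : ℝ, 0 < t → φ t = t⁻¹ * (f t / t ^ (p-1)) := by
    intro t ht
    show f t / t ^ p = _
    rw [show p = (p-1) + 1 by ring, Real.rpow_add ht, Real.rpow_one]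
    field_simp
    rw [show p - 1 + 1 - 1 = p - 1 by ring]
  -- concavity
  have hconc : ConcaveOn ℝ T (fun s => 1 / g s) := by
    refine ⟨hTconv, ?_⟩
    intro x hx y hy a b ha hb hab
    rcases eq_or_lt_of_le ha with ha0 | ha0
    · rw [← ha0] at hab ⊢; simp at hab; simp [hab]
    rcases eq_or_lt_of_le hb with hb0 | hb0
    · rw [← hb0] at hab ⊢; simp at hab; simp [hab]
    have ht₁ : g x ∈ Ioi m := hg_mem x hx
    have ht₂ : g y ∈ Ioi m := hg_mem y hy
    have ht₁0 : 0 < g x := hsub ht₁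
    have ht₂0 : 0 < g y := hsub ht₂
    set t₁ : ℝ := g x with ht₁def
    set t₂ : ℝ := g y with ht₂def
    set w : ℝ := a * t₁⁻¹ + b * t₂⁻¹ with hwdef
    have hw0 : 0 < w :=
      add_pos (mul_pos ha0 (inv_pos.2 ht₁0)) (mul_pos hb0 (inv_pos.2 ht₂0))
    have hwinv_mem : w⁻¹ ∈ Ioi m := by
      rcases eq_or_lt_of_le hm with hm0 | hm0
      · rw [mem_Ioi, ← hm0]; exact inv_pos.2 hw0
      · have h₁ : t₁⁻¹ < m⁻¹ := by
          apply inv_strictAnti₀ hm0 ht₁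
        have h₂ : t₂⁻¹ < m⁻¹ := by
          apply inv_strictAnti₀ hm0 ht₂
        have hwm : w < m⁻¹ := by
          calc w < a * m⁻¹ + b * m⁻¹ :=
                add_lt_add (mul_lt_mul_of_pos_left h₁ ha0) (mul_lt_mul_of_pos_left h₂ hb0)
            _ = m⁻¹ := by rw [← add_mul, hab, one_mul]
        rw [mem_Ioi]
        calc m = (m⁻¹)⁻¹ := (inv_inv m).symm
          _ < w⁻¹ := inv_strictAnti₀ hw0 hwm
    have hwi0 : 0 < w⁻¹ := inv_pos.2 hw0
    set μ : ℝ := a * t₁⁻¹ / w with hμdef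
    set ν : ℝ := b * t₂⁻¹ / w with hνdef
    have hμ0 : 0 ≤ μ := by
      rw [hμdef]; positivity
    have hν0 : 0 ≤ ν := by
      rw [hνdef]; positivity
    have hμν : μ + ν = 1 := by
      rw [hμdef, hνdef, ← add_div, ← hwdef, div_self hw0.ne']
    have e1 : μ * t₁ = a / w := by
      rw [hμdef, div_mul_eq_mul_div, mul_assoc, inv_mul_cancel₀ ht₁0.ne', mul_one]
    have e2 : ν * t₂ = b / w := by
      rw [hνdef, div_mul_eq_mul_div, mul_assoc, inv_mul_cancel₀ ht₂0.ne', mul_one]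
    have hcomb : μ • t₁ + ν • t₂ = w⁻¹ := by
      simp only [smul_eq_mul]
      rw [e1, e2, ← add_div, hab, one_div]
    have hkey : f w⁻¹ / (w⁻¹) ^ (p-1) ≤ μ * (f t₁ / t₁ ^ (p-1)) + ν * (f t₂ / t₂ ^ (p-1)) := by
      have h := hf₁conv.2 ht₁ ht₂ hμ0 hν0 hμν
      rw [hcomb] at h
      simpa [smul_eq_mul] using h
    have hφw : φ w⁻¹ ≤ a * x + b * y := by
      rw [hrwφ _ hwi0, inv_inv]
      calc w * (f w⁻¹ / (w⁻¹) ^ (p-1))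
          ≤ w * (μ * (f t₁ / t₁ ^ (p-1)) + ν * (f t₂ / t₂ ^ (p-1))) :=
            mul_le_mul_of_nonneg_left hkey hw0.le
        _ = a * (t₁⁻¹ * (f t₁ / t₁ ^ (p-1))) + b * (t₂⁻¹ * (f t₂ / t₂ ^ (p-1))) := by
            have e3 : w * μ = a * t₁⁻¹ := by rw [hμdef]; field_simp
            have e4 : w * ν = b * t₂⁻¹ := by rw [hνdef]; field_simp
            rw [mul_add, ← mul_assoc, ← mul_assoc, e3, e4, mul_assoc, mul_assoc]
        _ = a * φ t₁ + b * φ t₂ := by rw [← hrwφ t₁ ht₁0, ← hrwφ t₂ ht₂0]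
        _ = a * x + b * y := by rw [ht₁def, ht₂def, hg_eq x hx, hg_eq y hy]
    have hz : a • x + b • y ∈ T := hTconv hx hy ha hb hab
    have hgz : g (a • x + b • y) ∈ Ioi m := hg_mem _ hz
    have hgz0 : 0 < g (a • x + b • y) := hsub hgz
    have hle : g (a • x + b • y) ≤ w⁻¹ := by
      by_contra hcon
      push_neg at hcon
      have h2 := hanti hwinv_mem hgz hcon
      rw [hg_eq _ hz] at h2
      simp only [smul_eq_mul] at h2
      linarith
    have hfin : w ≤ (g (a • x + b • y))⁻¹ := by
      have h3 := inv_anti₀ hgz0 hle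
      rwa [inv_inv] at h3
    simp only [smul_eq_mul, one_div]
    calc a * t₁⁻¹ + b * t₂⁻¹ = w := hwdef.symm
      _ ≤ (g (a * x + b * y))⁻¹ := by
          simp only [smul_eq_mul] at hfin; exact hfin
  -- strict monotonicity
  have hmono : StrictMonoOn (fun s => 1 / g s) T := by
    intro x hx y hy hxy
    have h1 : g y < g x := by
      apply hg_lt y hy (g x) (hg_mem x hx)
      rw [hg_eq x hx]; exact hxy
    simp only [one_div]
    exact inv_strictAnti₀ (hg_pos y hy) h1
  -- tendsto at 0+
  have htend : Tendsto (fun s => 1 / g s) (𝓝[>] (0:ℝ)) (𝓝 0) := by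
    have hL0 : 0 < L := by
      rw [hLdef]
      exact ENNReal.div_pos (ne_of_gt hM) ENNReal.ofReal_ne_top
    obtain ⟨c, hc0, hcL⟩ := exists_between hL0
    have hc_ne : c ≠ ⊤ := by
      intro hceq
      rw [hceq] at hcL
      exact absurd hcL (not_lt.2 le_top)
    have hct : 0 < c.toReal := ENNReal.toReal_pos hc0.ne' hc_ne
    have hsubT : Ioo (0:ℝ) c.toReal ⊆ T := by
      intro s hs
      refine ⟨hs.1, ?_⟩
      calc ENNReal.ofReal s < c := (ENNReal.ofReal_lt_iff_lt_toReal hs.1.le hc_ne).2 hs.2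
        _ ≤ L := hcL.le
    rw [tendsto_order]
    constructor
    · intro c' hc'
      filter_upwards [Ioo_mem_nhdsGT hct] with s hs
      have hsT := hsubT hs
      have hgs := hg_pos s hsT
      have : 0 < 1 / g s := by positivity
      linarith
    · intro ε hε
      set t₀ : ℝ := max m ε⁻¹ + 1 with ht₀def
      have ht₀m : t₀ ∈ Ioi m := by
        rw [mem_Ioi, ht₀def]
        have := le_max_left m ε⁻¹; linarith
      have ht₀ε : ε⁻¹ < t₀ := by
        have := le_max_right m ε⁻¹; rw [ht₀def]; linarith
      have ht₀0 : 0 < t₀ := hsub ht₀m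
      have hδ : 0 < min (φ t₀) c.toReal := lt_min (hφpos _ ht₀m) hct
      filter_upwards [Ioo_mem_nhdsGT hδ] with s hs
      have hsT : s ∈ T := hsubT ⟨hs.1, lt_of_lt_of_le hs.2 (min_le_right _ _)⟩
      have hsφ : s < φ t₀ := lt_of_lt_of_le hs.2 (min_le_left _ _)
      have hgt : t₀ < g s := hg_gt s hsT t₀ ht₀m hsφ
      have h4 : (g s)⁻¹ < t₀⁻¹ := inv_strictAnti₀ ht₀0 hgt
      have h5 : t₀⁻¹ < ε := by
        have := inv_strictAnti₀ (inv_pos.2 hε) ht₀ε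
        rwa [inv_inv] at this
      rw [one_div]
      linarith
  exact ⟨hconv, hanti, hbij, hconc, hmono, htend⟩
end

section
/- Let m > 0, let ω₁ : (m,∞) → (0, ω₁(m)) be convex, decreasing with ω₁(t) → 0 as t → ∞, and define φ(t) = m·ω₁(t)/t for t > m. Then the function Φ defined on [0, ω₁(m)) by Φ(0) = 0 and Φ(t) = 1/φ⁻¹(t) for t ≠ 0 is concave and increasing on (0, ω₁(m)) with Φ(0⁺) = 0. -/
open Set Function Filter Topology

/-- Theorem 2.2(1): with `m > 0`, `ω₁` convex decreasing on `(m,∞)` with `ω₁(∞) = 0`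
and `ω₁(m) = L` (limit at `m⁺`), and `φ(t) = m ω₁(t)/t`, the function
`Φ(t) = 1/φ⁻¹(t)` (with `Φ(0) = 0`) is concave and increasing on `(0, L)` and
tends to `0` at `0⁺`. -/
theorem stmt6 (m : ℝ) (hm : 0 < m) (ω₁ : ℝ → ℝ) (L : ℝ)
    (hpos : ∀ t ∈ Ioi m, 0 < ω₁ t ∧ ω₁ t < L)
    (hconv : ConvexOn ℝ (Ioi m) ω₁)
    (hanti : StrictAntiOn ω₁ (Ioi m))
    (hlim₀ : Tendsto ω₁ atTop (nhds 0))
    (hlimm : Tendsto ω₁ (nhdsWithin m (Ioi m)) (nhds L)) :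
    ConcaveOn ℝ (Ioo 0 L)
      (fun t => if t = 0 then 0 else
        1 / Function.invFunOn (fun s => m * ω₁ s / s) (Ioi m) t) ∧
    StrictMonoOn
      (fun t => if t = 0 then 0 else
        1 / Function.invFunOn (fun s => m * ω₁ s / s) (Ioi m) t) (Ioo 0 L) ∧
    Tendsto
      (fun t => if t = 0 then 0 else
        1 / Function.invFunOn (fun s => m * ω₁ s / s) (Ioi m) t)
      (nhdsWithin 0 (Ioi 0)) (nhds 0) := by
  set f : ℝ → ℝ := fun s => m * ω₁ s / s with hf
  set g : ℝ → ℝ := Function.invFunOn f (Ioi m) with hg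
  -- f is strictly decreasing on (m, ∞)
  have hfanti : StrictAntiOn f (Ioi m) := by
    intro s hs s' hs' hss
    have h1 := hpos s hs
    have h2 := hpos s' hs'
    have hss' := hanti hs hs' hss
    have hs0 : (0:ℝ) < s := hm.trans hs
    have hs'0 : (0:ℝ) < s' := hm.trans hs'
    show m * ω₁ s' / s' < m * ω₁ s / s
    rw [div_lt_div_iff₀ hs'0 hs0]
    have k : ω₁ s' * s < ω₁ s * s' := by
      nlinarith [mul_lt_mul_of_pos_right hss' hs0, mul_lt_mul_of_pos_left hss h1.1]
    nlinarith [mul_lt_mul_of_pos_left k hm]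
  -- f maps (m, ∞) into (0, L)
  have hmaps : ∀ s ∈ Ioi m, f s ∈ Ioo 0 L := by
    intro s hs
    have h1 := hpos s hs
    have hs0 : (0:ℝ) < s := hm.trans hs
    constructor
    · exact div_pos (mul_pos hm h1.1) hs0
    · show m * ω₁ s / s < L
      rw [div_lt_iff₀ hs0]
      nlinarith [h1.1, h1.2, hs.out]
  have hL0 : 0 < L := by
    have h := hpos (m+1) (by simp only [mem_Ioi]; linarith)
    linarith [h.1, h.2]
  -- continuity of f on (m, ∞)
  have hcontω : ContinuousOn ω₁ (Ioi m) := hconv.continuousOn isOpen_Ioi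
  have hcontf : ContinuousOn f (Ioi m) := by
    apply ContinuousOn.div (continuousOn_const.mul hcontω) continuousOn_id
    intro s hs
    exact ne_of_gt (hm.trans hs)
  -- limit of f at infinity is 0
  have hlimtop : Tendsto f atTop (nhds 0) := by
    have h1 : Tendsto (fun s : ℝ => m / s * ω₁ s) atTop (nhds (0 * 0)) :=
      (tendsto_const_nhds.div_atTop tendsto_id).mul hlim₀
    rw [zero_mul] at h1
    refine h1.congr fun s => ?_
    show m / s * ω₁ s = m * ω₁ s / s
    ring
  -- limit of f at m⁺ is L
  have hlimm' : Tendsto f (nhdsWithin m (Ioi m)) (nhds L) := by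
    have hid : Tendsto (fun s : ℝ => s) (nhdsWithin m (Ioi m)) (nhds m) :=
      tendsto_id.mono_left nhdsWithin_le_nhds
    have h1 : Tendsto f (nhdsWithin m (Ioi m)) (nhds (m * L / m)) :=
      (tendsto_const_nhds.mul hlimm).div hid hm.ne'
    have h2 : m * L / m = L := by field_simp
    rwa [h2] at h1
  -- surjectivity of f onto (0, L)
  have hsurj : ∀ t ∈ Ioo 0 L, ∃ s ∈ Ioi m, f s = t := by
    rintro t ⟨ht0, htL⟩
    have h1 : ∀ᶠ s in nhdsWithin m (Ioi m), t < f s :=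
      hlimm'.eventually (eventually_gt_nhds htL)
    obtain ⟨s₁, hts₁, hs₁m⟩ := (h1.and eventually_mem_nhdsWithin).exists
    have h2 : ∀ᶠ s in atTop, f s < t := hlimtop.eventually (eventually_lt_nhds ht0)
    obtain ⟨s₂, hs₂, hs₂'⟩ := (h2.and (eventually_ge_atTop s₁)).exists
    have hsub : Icc s₁ s₂ ⊆ Ioi m := fun x hx => lt_of_lt_of_le hs₁m hx.1
    have hmem : t ∈ Icc (f s₂) (f s₁) := ⟨le_of_lt hs₂, le_of_lt hts₁⟩
    obtain ⟨s, hs, hfs⟩ := intermediate_value_Icc' hs₂' (hcontf.mono hsub) hmem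
    exact ⟨s, hsub hs, hfs⟩
  -- inverse function facts
  have hinj : InjOn f (Ioi m) := hfanti.injOn
  have hgmem : ∀ t ∈ Ioo 0 L, g t ∈ Ioi m := fun t ht =>
    Function.invFunOn_mem (hsurj t ht)
  have hfg : ∀ t ∈ Ioo 0 L, f (g t) = t := fun t ht =>
    Function.invFunOn_eq (hsurj t ht)
  have hgf : ∀ s ∈ Ioi m, g (f s) = s := by
    intro s hs
    have he : ∃ a ∈ Ioi m, f a = f s := ⟨s, hs, rfl⟩
    exact hinj (Function.invFunOn_mem he) hs (Function.invFunOn_eq he)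
  have hgpos : ∀ t ∈ Ioo 0 L, 0 < g t := fun t ht => hm.trans (hgmem t ht)
  -- g is strictly decreasing on (0, L)
  have hganti : ∀ t₁ ∈ Ioo 0 L, ∀ t₂ ∈ Ioo 0 L, t₁ < t₂ → g t₂ < g t₁ := by
    intro t₁ ht₁ t₂ ht₂ h12
    by_contra hc
    push_neg at hc
    rcases hc.lt_or_eq with h | h
    · have := hfanti (hgmem t₁ ht₁) (hgmem t₂ ht₂) h
      rw [hfg t₁ ht₁, hfg t₂ ht₂] at this
      linarith
    · have : t₂ = t₁ := by rw [← hfg t₁ ht₁, ← hfg t₂ ht₂, h]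
      linarith
  -- strict monotonicity of Φ
  have hmono : StrictMonoOn (fun t => if t = 0 then (0:ℝ) else 1 / g t) (Ioo 0 L) := by
    intro t₁ ht₁ t₂ ht₂ h12
    simp only [if_neg ht₁.1.ne', if_neg ht₂.1.ne']
    exact one_div_lt_one_div_of_lt (hgpos t₂ ht₂) (hganti t₁ ht₁ t₂ ht₂ h12)
  -- concavity of Φ
  have hconc : ConcaveOn ℝ (Ioo 0 L) (fun t => if t = 0 then (0:ℝ) else 1 / g t) := by
    refine ⟨convex_Ioo 0 L, ?_⟩
    intro t₁ ht₁ t₂ ht₂ a b ha hb hab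
    have hcomb : a • t₁ + b • t₂ ∈ Ioo 0 L := (convex_Ioo 0 L) ht₁ ht₂ ha hb hab
    simp only [smul_eq_mul] at hcomb ⊢
    have hs₁ := hgmem t₁ ht₁
    have hs₂ := hgmem t₂ ht₂
    have hs₁0 : 0 < g t₁ := hm.trans hs₁
    have hs₂0 : 0 < g t₂ := hm.trans hs₂
    set s₁ := g t₁ with hs₁d
    set s₂ := g t₂ with hs₂d
    set w : ℝ := a / s₁ + b / s₂ with hw
    have hw0 : 0 < w := by
      rcases ha.lt_or_eq with ha' | ha'
      · have h1 : 0 < a / s₁ := div_pos ha' hs₁0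
        have h2 : 0 ≤ b / s₂ := div_nonneg hb hs₂0.le
        rw [hw]; linarith
      · have hb' : (0:ℝ) < b := by linarith
        have h1 : 0 < b / s₂ := div_pos hb' hs₂0
        have h2 : a / s₁ = 0 := by rw [← ha', zero_div]
        rw [hw]; linarith
    have hlam : 0 ≤ a / s₁ / w := div_nonneg (div_nonneg ha hs₁0.le) hw0.le
    have hmu : 0 ≤ b / s₂ / w := div_nonneg (div_nonneg hb hs₂0.le) hw0.le
    have hsum : a / s₁ / w + b / s₂ / w = 1 := by
      rw [← add_div, ← hw, div_self hw0.ne']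
    set x : ℝ := (a / s₁ / w) * s₁ + (b / s₂ / w) * s₂ with hx
    have hwx : w * x = a + b := by
      rw [hx]
      field_simp
    have hxw : x = 1 / w := by
      rw [eq_div_iff hw0.ne', mul_comm, hwx, hab]
    have hxmem : x ∈ Ioi m := by
      have := (convex_Ioi m) hs₁ hs₂ hlam hmu hsum
      simpa [smul_eq_mul] using this
    have hx0 : 0 < x := hm.trans hxmem
    have hωx : ω₁ x ≤ (a / s₁ / w) * ω₁ s₁ + (b / s₂ / w) * ω₁ s₂ := by
      have := hconv.2 hs₁ hs₂ hlam hmu hsum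
      simpa [smul_eq_mul] using this
    have ht₁f : f s₁ = t₁ := hfg t₁ ht₁
    have ht₂f : f s₂ = t₂ := hfg t₂ ht₂
    -- f x ≤ a t₁ + b t₂
    have hfx_le : f x ≤ a * t₁ + b * t₂ := by
      rw [← ht₁f, ← ht₂f]
      show m * ω₁ x / x ≤ a * (m * ω₁ s₁ / s₁) + b * (m * ω₁ s₂ / s₂)
      have h1 : (m * w) * ω₁ x ≤ (m * w) * ((a / s₁ / w) * ω₁ s₁ + (b / s₂ / w) * ω₁ s₂) :=
        mul_le_mul_of_nonneg_left hωx (mul_pos hm hw0).le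
      have h2 : m * ω₁ x / x = (m * w) * ω₁ x := by
        rw [hxw]
        field_simp [hw0.ne']
      have h3 : (m * w) * ((a / s₁ / w) * ω₁ s₁ + (b / s₂ / w) * ω₁ s₂)
          = a * (m * ω₁ s₁ / s₁) + b * (m * ω₁ s₂ / s₂) := by
        field_simp
      rw [h2]
      rw [h3] at h1
      exact h1
    have hfxmem : f x ∈ Ioo 0 L := hmaps x hxmem
    -- Φ (f x) = w
    have hΦfx : (if f x = 0 then (0:ℝ) else 1 / g (f x)) = w := by
      rw [if_neg hfxmem.1.ne', hgf x hxmem, hxw, one_div_one_div]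
    have hstep := hmono.monotoneOn hfxmem hcomb hfx_le
    rw [hΦfx, if_neg hcomb.1.ne'] at hstep
    simp only [if_neg ht₁.1.ne', if_neg ht₂.1.ne', if_neg hcomb.1.ne']
    have hval : a * (1 / s₁) + b * (1 / s₂) = w := by rw [hw]; ring
    linarith [hstep]
  -- limit of Φ at 0⁺
  have hglim : Tendsto g (nhdsWithin 0 (Ioi 0)) atTop := by
    rw [tendsto_atTop]
    intro b
    set M : ℝ := max b (m+1) with hM
    have hMm : M ∈ Ioi m := lt_of_lt_of_le (by linarith) (le_max_right b (m+1))
    have hfM : f M ∈ Ioo 0 L := hmaps M hMm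
    filter_upwards [Ioo_mem_nhdsGT_of_mem ⟨le_refl (0:ℝ), hfM.1⟩] with t ht
    have htL : t ∈ Ioo 0 L := ⟨ht.1, ht.2.trans hfM.2⟩
    have hMg : M < g t := by
      by_contra hc
      push_neg at hc
      rcases hc.lt_or_eq with h | h
      · have := hfanti (hgmem t htL) hMm h
        rw [hfg t htL] at this
        linarith [ht.2]
      · have : f M = t := by rw [← h, hfg t htL]
        linarith [ht.2]
    calc b ≤ M := le_max_left b (m+1)
      _ ≤ g t := hMg.le
  have hlimΦ : Tendsto (fun t => if t = 0 then (0:ℝ) else 1 / g t)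
      (nhdsWithin 0 (Ioi 0)) (nhds 0) := by
    have h1 : Tendsto (fun t => 1 / g t) (nhdsWithin 0 (Ioi 0)) (nhds 0) := by
      have := tendsto_inv_atTop_zero.comp hglim
      simpa [Function.comp_def, one_div] using this
    refine h1.congr' ?_
    filter_upwards [self_mem_nhdsWithin] with t ht
    rw [if_neg (ne_of_gt ht)]
  exact ⟨hconc, hmono, hlimΦ⟩
end

section
/- Let A ≥ 1 and Ω = ℝᴺ \ \overline{B}(0,1). For every f ∈ L²(Ω; ℂ), f ≢ 0, with |x| f(x) ∈ L²(Ω; ℂ), one has ‖f‖_{L²(Ω)} ≤ 2 (∫_Ω |f(x)|² |x|² dx)^{1/2} · A / ( A + ln( ‖f‖²_{L²(Ω)} / ∫_Ω |f(x)|² e^{−A|x|} dx ) ). -/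
open Set Function MeasureTheory

set_option maxHeartbeats 2000000 in
/-- Inequality (2.12): for `A ≥ 1`, `Ω = ℝᴺ \ B̄(0,1)` and `f ∈ L²(Ω;ℂ)`, `f ≢ 0`, with
`|x| f(x) ∈ L²(Ω;ℂ)`,
`‖f‖_{L²} ≤ 2 (∫ |f|²|x|²)^{1/2} · A / (A + ln(‖f‖²_{L²} / ∫ |f|² e^{-A|x|}))`. -/
theorem stmt10 (N : ℕ) (A : ℝ) (hA : 1 ≤ A)
    (f : EuclideanSpace ℝ (Fin N) → ℂ)
    (hfm : AEStronglyMeasurable f (volume.restrict {x | 1 < ‖x‖}))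
    (hf2 : Integrable (fun x => ‖f x‖ ^ 2) (volume.restrict {x | 1 < ‖x‖}))
    (hfx : Integrable (fun x => ‖f x‖ ^ 2 * ‖x‖ ^ 2)
      (volume.restrict {x | 1 < ‖x‖}))
    (hne : ¬ f =ᵐ[volume.restrict {x | 1 < ‖x‖}] 0) :
    Real.sqrt (∫ x in {x : EuclideanSpace ℝ (Fin N) | 1 < ‖x‖}, ‖f x‖ ^ 2) ≤
      2 * Real.sqrt (∫ x in {x : EuclideanSpace ℝ (Fin N) | 1 < ‖x‖},
          ‖f x‖ ^ 2 * ‖x‖ ^ 2) *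
        A / (A + Real.log
          ((∫ x in {x : EuclideanSpace ℝ (Fin N) | 1 < ‖x‖}, ‖f x‖ ^ 2) /
            ∫ x in {x : EuclideanSpace ℝ (Fin N) | 1 < ‖x‖},
              ‖f x‖ ^ 2 * Real.exp (-A * ‖x‖))) := by
  set Ω : Set (EuclideanSpace ℝ (Fin N)) := {x | 1 < ‖x‖} with hΩdef
  have hΩm : MeasurableSet Ω := (isOpen_lt continuous_const continuous_norm).measurableSet
  have hae : ∀ᵐ x ∂(volume.restrict Ω), 1 < ‖x‖ := by
    filter_upwards [ae_restrict_mem hΩm] with x hx using hx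
  set I := ∫ x in Ω, ‖f x‖ ^ 2 with hIdef
  set J := ∫ x in Ω, ‖f x‖ ^ 2 * ‖x‖ ^ 2 with hJdef
  set K := ∫ x in Ω, ‖f x‖ ^ 2 * Real.exp (-A * ‖x‖) with hKdef
  have hA0 : (0:ℝ) < A := by linarith
  -- integrability of the exponential-weighted integrand
  have hKint : Integrable (fun x => ‖f x‖ ^ 2 * Real.exp (-A * ‖x‖)) (volume.restrict Ω) := by
    refine hf2.mono (hf2.1.mul ?_) (ae_of_all _ fun x => ?_)
    · exact (Real.continuous_exp.comp (continuous_const.mul continuous_norm)).aestronglyMeasurable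
    · have h1 : Real.exp (-A * ‖x‖) ≤ 1 := by
        apply Real.exp_le_one_iff.mpr
        nlinarith [norm_nonneg x]
      have h0 : (0:ℝ) ≤ ‖f x‖ ^ 2 := by positivity
      rw [Real.norm_eq_abs, Real.norm_eq_abs, abs_of_nonneg (by positivity), abs_of_nonneg h0]
      nlinarith [Real.exp_pos (-A * ‖x‖)]
  -- integrability of ‖f‖² ‖x‖
  have hsum : Integrable (fun x => ‖f x‖ ^ 2 + ‖f x‖ ^ 2 * ‖x‖ ^ 2) (volume.restrict Ω) :=
    hf2.add hfx
  have hgx1 : Integrable (fun x => ‖f x‖ ^ 2 * ‖x‖) (volume.restrict Ω) := by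
    refine hsum.mono (hf2.1.mul continuous_norm.aestronglyMeasurable)
      (ae_of_all _ fun x => ?_)
    have h0 : (0:ℝ) ≤ ‖f x‖ ^ 2 := by positivity
    rw [Real.norm_eq_abs, Real.norm_eq_abs, abs_of_nonneg (by positivity),
      abs_of_nonneg (by positivity)]
    nlinarith [mul_nonneg h0 (sq_nonneg (‖x‖ - 1)), norm_nonneg x]
  set S := ∫ x in Ω, ‖f x‖ ^ 2 * ‖x‖ with hSdef
  clear_value I J K S
  -- positivity of I
  have hI0 : 0 ≤ I := hIdef ▸ integral_nonneg fun x => by positivity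
  have hIne : I ≠ 0 := by
    intro h
    rw [hIdef] at h
    apply hne
    have := (integral_eq_zero_iff_of_nonneg (fun x => by positivity) hf2).mp h
    filter_upwards [this] with x hx
    simpa [pow_eq_zero_iff, norm_eq_zero] using hx
  have hIpos : 0 < I := lt_of_le_of_ne hI0 (Ne.symm hIne)
  -- positivity of K
  have hKpos : 0 < K := by
    rw [hKdef]
    rcases (integral_nonneg (f := fun x => ‖f x‖ ^ 2 * Real.exp (-A * ‖x‖)) (fun x : EuclideanSpace ℝ (Fin N) => by positivity :
        ∀ x, (0:ℝ) ≤ ‖f x‖ ^ 2 * Real.exp (-A * ‖x‖))).lt_or_eq with h | h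
    · exact h
    exfalso
    apply hne
    have := (integral_eq_zero_iff_of_nonneg (fun x => by positivity) hKint).mp h.symm
    filter_upwards [this] with x hx
    have : ‖f x‖ ^ 2 = 0 := by
      have he := Real.exp_pos (-A * ‖x‖)
      have := hx
      simp only [Pi.zero_apply] at this
      nlinarith [sq_nonneg ‖f x‖]
    simpa [pow_eq_zero_iff, norm_eq_zero] using this
  have hS0 : 0 ≤ S := hSdef ▸ integral_nonneg fun x => by positivity
  -- I ≤ J
  have hIJ : I ≤ J := by
    rw [hIdef, hJdef]
    refine integral_mono_ae hf2 hfx ?_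
    filter_upwards [hae] with x hx
    have h1 : (1:ℝ) ≤ ‖x‖ ^ 2 := by nlinarith
    calc ‖f x‖ ^ 2 = ‖f x‖ ^ 2 * 1 := by ring
      _ ≤ ‖f x‖ ^ 2 * ‖x‖ ^ 2 := by
          exact mul_le_mul_of_nonneg_left h1 (by positivity)
  have hJpos : 0 < J := lt_of_lt_of_le hIpos hIJ
  set a := Real.sqrt I with hadef
  set b := Real.sqrt J with hbdef
  have hapos : 0 < a := Real.sqrt_pos.mpr hIpos
  have hbpos : 0 < b := Real.sqrt_pos.mpr hJpos
  have haI : a ^ 2 = I := Real.sq_sqrt hI0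
  have hbJ : b ^ 2 = J := Real.sq_sqrt hJpos.le
  have hab : a ≤ b := Real.sqrt_le_sqrt hIJ
  -- Cauchy–Schwarz via the ε-trick: S ≤ a * b
  have hSab : S ≤ a * b := by
    set ε := b / a with hεdef
    have hεpos : 0 < ε := div_pos hbpos hapos
    have key : S ≤ (ε / 2) * I + (1 / (2 * ε)) * J := by
      have hint : Integrable
          (fun x => (ε / 2) * ‖f x‖ ^ 2 + (1 / (2 * ε)) * (‖f x‖ ^ 2 * ‖x‖ ^ 2))
          (volume.restrict Ω) := (hf2.const_mul (ε / 2)).add (hfx.const_mul (1 / (2 * ε)))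
      have hmono := integral_mono_ae hgx1 hint (ae_of_all _ fun x => ?_)
      · rw [integral_add (hf2.const_mul _) (hfx.const_mul _),
          integral_const_mul, integral_const_mul] at hmono
        rw [hSdef, hIdef, hJdef]
        exact hmono
      · have h0 : (0:ℝ) ≤ ‖f x‖ ^ 2 := by positivity
        show ‖f x‖ ^ 2 * ‖x‖ ≤ (ε / 2) * ‖f x‖ ^ 2 + (1 / (2 * ε)) * (‖f x‖ ^ 2 * ‖x‖ ^ 2)
        have hkey : (ε / 2) * ‖f x‖ ^ 2 + (1 / (2 * ε)) * (‖f x‖ ^ 2 * ‖x‖ ^ 2)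
            - ‖f x‖ ^ 2 * ‖x‖ = (‖f x‖ ^ 2 * (ε - ‖x‖) ^ 2) / (2 * ε) := by
          field_simp
          ring
        have hnn : (0:ℝ) ≤ (‖f x‖ ^ 2 * (ε - ‖x‖) ^ 2) / (2 * ε) :=
          div_nonneg (mul_nonneg h0 (sq_nonneg _)) (by linarith)
        linarith
    have heq : (ε / 2) * I + (1 / (2 * ε)) * J = a * b := by
      rw [← haI, ← hbJ, hεdef]
      field_simp
      ring
    linarith [key, heq.le]
  set c := A * S / I with hcdef
  have hc0 : 0 ≤ c := div_nonneg (mul_nonneg hA0.le hS0) hI0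
  -- lower bound  I * exp(-c) ≤ K  via convexity of exp
  have hKlow : I * Real.exp (-c) ≤ K := by
    have hint2 : Integrable
        (fun x => Real.exp (-c) * ((1 + c) * ‖f x‖ ^ 2 - A * (‖f x‖ ^ 2 * ‖x‖)))
        (volume.restrict Ω) :=
      ((hf2.const_mul (1 + c)).sub (hgx1.const_mul A)).const_mul (Real.exp (-c))
    have hmono := integral_mono_ae hint2 hKint (ae_of_all _ fun x => ?_)
    · rw [integral_const_mul, integral_sub (hf2.const_mul _) (hgx1.const_mul _),
        integral_const_mul, integral_const_mul, ← hIdef, ← hSdef, ← hKdef] at hmono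
      have hcI : c * I = A * S := by
        rw [hcdef]; field_simp
      calc I * Real.exp (-c) = Real.exp (-c) * ((1 + c) * I - A * S) := by
            rw [← hcI]; ring
        _ ≤ K := hmono
    · -- pointwise: exp(-c) * ((1+c)·g - A·g‖x‖) ≤ g · exp(-A‖x‖)
      show Real.exp (-c) * ((1 + c) * ‖f x‖ ^ 2 - A * (‖f x‖ ^ 2 * ‖x‖)) ≤
        ‖f x‖ ^ 2 * Real.exp (-A * ‖x‖)
      have h0 : (0:ℝ) ≤ ‖f x‖ ^ 2 := by positivity
      have hexp : 1 + (c - A * ‖x‖) ≤ Real.exp (c - A * ‖x‖) := by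
        linarith [Real.add_one_le_exp (c - A * ‖x‖)]
      have hsplit : Real.exp (-A * ‖x‖) = Real.exp (-c) * Real.exp (c - A * ‖x‖) := by
        rw [← Real.exp_add]; ring_nf
      rw [hsplit]
      have := mul_le_mul_of_nonneg_left hexp
        (mul_nonneg h0 (Real.exp_pos (-c)).le)
      nlinarith [this]
  -- upper bound  K ≤ exp(-A) * I
  have hKhigh : K ≤ Real.exp (-A) * I := by
    have hpt : ∀ᵐ x ∂(volume.restrict Ω), ‖f x‖ ^ 2 * Real.exp (-A * ‖x‖) ≤
        Real.exp (-A) * ‖f x‖ ^ 2 := by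
      filter_upwards [hae] with x hx
      have h0 : (0:ℝ) ≤ ‖f x‖ ^ 2 := by positivity
      have hee : Real.exp (-A * ‖x‖) ≤ Real.exp (-A) := by
        apply Real.exp_le_exp.mpr; nlinarith
      nlinarith [mul_le_mul_of_nonneg_left hee h0]
    have hmono := integral_mono_ae hKint (hf2.const_mul (Real.exp (-A))) hpt
    rw [integral_const_mul, ← hIdef, ← hKdef] at hmono
    exact hmono
  set L := Real.log (I / K) with hLdef
  have hIK : 0 < I / K := div_pos hIpos hKpos
  have hLA : A ≤ L := by
    rw [hLdef, Real.le_log_iff_exp_le hIK, le_div_iff₀ hKpos]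
    calc Real.exp A * K ≤ Real.exp A * (Real.exp (-A) * I) := by
          exact mul_le_mul_of_nonneg_left hKhigh (Real.exp_pos A).le
      _ = I := by rw [← mul_assoc, ← Real.exp_add]; simp
  have hLc : L ≤ c := by
    rw [hLdef, Real.log_le_iff_le_exp hIK, div_le_iff₀ hKpos]
    calc I = (I * Real.exp (-c)) * Real.exp c := by
          rw [mul_assoc, ← Real.exp_add]; simp
      _ ≤ K * Real.exp c := by
          exact mul_le_mul_of_nonneg_right hKlow (Real.exp_pos c).le
      _ = Real.exp c * K := by ring
  have hcb : c ≤ A * b / a := by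
    rw [hcdef, ← haI]
    rw [div_le_div_iff₀ (by positivity) hapos]
    calc A * S * a ≤ A * (a * b) * a := by
          nlinarith [mul_le_mul_of_nonneg_left hSab (mul_nonneg hA0.le hapos.le)]
      _ = A * b * a ^ 2 := by ring
  have hden : 0 < A + L := by linarith
  rw [le_div_iff₀ hden]
  -- final arithmetic: a * (A + L) ≤ 2 * b * A
  have haL : a * L ≤ A * b := by
    calc a * L ≤ a * (A * b / a) := by
          exact mul_le_mul_of_nonneg_left (le_trans hLc hcb) hapos.le
      _ = A * b := by field_simp
  nlinarith [mul_le_mul_of_nonneg_right hab hA0.le]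
end

section
/- Let A ≥ 1 and let u = (u_n)_{n≥1} ∈ ℓ²(ℕ; ℂ), u ≢ 0, be such that (n u_n)_{n≥1} ∈ ℓ²(ℕ; ℂ). Then ‖u‖_{ℓ²} ≤ 2 (∑_{n=1}^∞ n² |u_n|²)^{1/2} · A / ( A − ln( (1/‖u‖²_{ℓ²}) ∑_{n=1}^∞ e^{−An} |u_n|² ) ). -/
open Set Function

set_option maxHeartbeats 1000000 in
/-- Inequality (2.13): for `A ≥ 1` and a nonzero square-summable sequence
`(u_n)_{n ≥ 1}` (modelled by `u : ℕ → ℂ` with `u 0 = 0`) with `(n u_n) ∈ ℓ²`,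
`‖u‖_{ℓ²} ≤ 2 (∑ n² |u_n|²)^{1/2} · A / (A - ln((1/‖u‖²) ∑ e^{-An} |u_n|²))`. -/
theorem stmt11 (A : ℝ) (hA : 1 ≤ A) (u : ℕ → ℂ) (h0 : u 0 = 0)
    (hu : Summable (fun n : ℕ => ‖u n‖ ^ 2))
    (hnu : Summable (fun n : ℕ => (n : ℝ) ^ 2 * ‖u n‖ ^ 2))
    (hne : u ≠ 0) :
    Real.sqrt (∑' n : ℕ, ‖u n‖ ^ 2) ≤
      2 * Real.sqrt (∑' n : ℕ, (n : ℝ) ^ 2 * ‖u n‖ ^ 2) *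
        A / (A - Real.log
          ((∑' n : ℕ, Real.exp (-A * n) * ‖u n‖ ^ 2) / ∑' n : ℕ, ‖u n‖ ^ 2)) := by
  set S := ∑' n : ℕ, ‖u n‖ ^ 2 with hSdef
  set T := ∑' n : ℕ, (n : ℝ) ^ 2 * ‖u n‖ ^ 2 with hTdef
  set E := ∑' n : ℕ, Real.exp (-A * n) * ‖u n‖ ^ 2 with hEdef
  obtain ⟨n0, hn0⟩ : ∃ n, u n ≠ 0 := by
    by_contra h; push_neg at h; exact hne (funext h)
  have hA0 : 0 < A := lt_of_lt_of_le one_pos hA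
  have hS : 0 < S :=
    Summable.tsum_pos hu (fun n => by positivity) n0 (pow_pos (norm_pos_iff.2 hn0) 2)
  have hMsum : Summable (fun n : ℕ => (n : ℝ) * ‖u n‖ ^ 2) := by
    apply hnu.of_nonneg_of_le (fun n => by positivity)
    intro n
    have : (n : ℝ) ≤ (n : ℝ) ^ 2 := by
      rcases Nat.eq_zero_or_pos n with h | h
      · simp [h]
      · have : (1:ℝ) ≤ (n:ℝ) := by exact_mod_cast h
        nlinarith
    nlinarith [sq_nonneg ‖u n‖]
  set M := ∑' n : ℕ, (n : ℝ) * ‖u n‖ ^ 2 with hMdef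
  have hEsum : Summable (fun n : ℕ => Real.exp (-A * n) * ‖u n‖ ^ 2) := by
    apply hu.of_nonneg_of_le (fun n => by positivity)
    intro n
    have h1 : Real.exp (-A * n) ≤ 1 := Real.exp_le_one_iff.2 (by have := Nat.cast_nonneg (α := ℝ) n; nlinarith)
    nlinarith [sq_nonneg ‖u n‖, Real.exp_pos (-A * n)]
  have hE : 0 < E :=
    Summable.tsum_pos hEsum (fun n => by positivity) n0 (mul_pos (Real.exp_pos _) (pow_pos (norm_pos_iff.2 hn0) 2))
  -- S ≤ T
  have hST : S ≤ T := by
    apply Summable.tsum_le_tsum _ hu hnu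
    intro n
    rcases Nat.eq_zero_or_pos n with h | h
    · simp [h, h0]
    · have h1 : (1:ℝ) ≤ (n:ℝ) := by exact_mod_cast h
      have h2 : (1:ℝ) ≤ (n:ℝ)^2 := by nlinarith
      nlinarith [mul_le_mul_of_nonneg_right h2 (by positivity : (0:ℝ) ≤ ‖u n‖^2)]
  have hT : 0 < T := lt_of_lt_of_le hS hST
  have hsS : 0 < Real.sqrt S := Real.sqrt_pos.2 hS
  have hsT : 0 < Real.sqrt T := Real.sqrt_pos.2 hT
  -- Cauchy–Schwarz pointwise: M ≤ √T * √S
  have hMle : M ≤ Real.sqrt T * Real.sqrt S := by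
    set c := Real.sqrt S / Real.sqrt T with hcdef
    have hc : 0 < c := by positivity
    have hcc : c * c⁻¹ = 1 := mul_inv_cancel₀ hc.ne'
    have key : ∀ n : ℕ, (n : ℝ) * ‖u n‖ ^ 2 ≤
        (c * ((n:ℝ)^2 * ‖u n‖^2) + c⁻¹ * ‖u n‖^2) / 2 := by
      intro n
      have hx : (0:ℝ) ≤ ‖u n‖^2 := by positivity
      have h2 : 0 ≤ ‖u n‖^2 * (c * (n:ℝ) - 1)^2 := by positivity
      have hci : 0 < c⁻¹ := by positivity
      nlinarith [mul_nonneg hx (sq_nonneg (c * (n:ℝ) - 1)), hcc]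
    have hsum2 : Summable (fun n : ℕ => (c * ((n:ℝ)^2 * ‖u n‖^2) + c⁻¹ * ‖u n‖^2) / 2) :=
      (((hnu.mul_left c).add (hu.mul_left c⁻¹)).div_const 2)
    have := Summable.tsum_le_tsum key hMsum hsum2
    rw [tsum_div_const, Summable.tsum_add (hnu.mul_left c) (hu.mul_left c⁻¹),
      tsum_mul_left, tsum_mul_left] at this
    have hcT : c * T = Real.sqrt S * Real.sqrt T := by
      rw [hcdef, div_mul_eq_mul_div, mul_div_assoc, Real.div_sqrt]
    have hciS : c⁻¹ * S = Real.sqrt T * Real.sqrt S := by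
      rw [hcdef, inv_div, div_mul_eq_mul_div, mul_div_assoc, Real.div_sqrt]
    rw [← hSdef, ← hTdef, hcT, hciS] at this
    linarith
  set m := M / S with hmdef
  have hm0 : 0 ≤ M := tsum_nonneg (fun n => by positivity)
  have hmnn : 0 ≤ m := by positivity
  -- Jensen-type lower bound: exp(-(A*m)) * S ≤ E
  have hJ : Real.exp (-(A * m)) * S ≤ E := by
    set c := A * m with hcdef
    have key : ∀ n : ℕ, Real.exp (-c) * ((1 + c) * ‖u n‖^2 - A * ((n:ℝ) * ‖u n‖^2))
        ≤ Real.exp (-A * n) * ‖u n‖ ^ 2 := by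
      intro n
      have h1 : Real.exp (-A * n) = Real.exp (-c) * Real.exp (c - A * n) := by
        rw [← Real.exp_add]; ring_nf
      have h2 : 1 + (c - A * n) ≤ Real.exp (c - A * n) := by linarith [Real.add_one_le_exp (c - A * (n:ℝ))]
      have hx : (0:ℝ) ≤ ‖u n‖^2 := by positivity
      rw [h1]
      have := Real.exp_pos (-c)
      nlinarith [mul_nonneg (mul_nonneg this.le hx) (sub_nonneg.2 h2)]
    have hsumL : Summable (fun n : ℕ =>
        Real.exp (-c) * ((1 + c) * ‖u n‖^2 - A * ((n:ℝ) * ‖u n‖^2))) :=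
      (((hu.mul_left (1 + c)).sub (hMsum.mul_left A)).mul_left _)
    have := Summable.tsum_le_tsum key hsumL hEsum
    rw [tsum_mul_left, Summable.tsum_sub (hu.mul_left (1 + c)) (hMsum.mul_left A),
      tsum_mul_left, tsum_mul_left, ← hSdef, ← hMdef, ← hEdef] at this
    have heq : (1 + c) * S - A * M = S := by
      have h5 : c * S = A * M := by
        rw [hcdef, hmdef]; field_simp
      nlinarith [h5]
    rw [heq] at this
    exact this
  -- upper bound on E: E ≤ exp(-A) * S
  have hEub : E ≤ Real.exp (-A) * S := by
    have key : ∀ n : ℕ, Real.exp (-A * n) * ‖u n‖^2 ≤ Real.exp (-A) * ‖u n‖^2 := by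
      intro n
      rcases Nat.eq_zero_or_pos n with h | h
      · simp [h, h0]
      · have h1 : (1:ℝ) ≤ (n:ℝ) := by exact_mod_cast h
        have : Real.exp (-A * n) ≤ Real.exp (-A) := by
          apply Real.exp_le_exp.2; nlinarith
        nlinarith [sq_nonneg ‖u n‖]
    have := Summable.tsum_le_tsum key hEsum (hu.mul_left _)
    rw [tsum_mul_left, ← hSdef, ← hEdef] at this
    exact this
  have hlogub : Real.log (E / S) ≤ -A := by
    have h1 : E / S ≤ Real.exp (-A) := by
      rw [div_le_iff₀ hS]; linarith
    calc Real.log (E / S) ≤ Real.log (Real.exp (-A)) :=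
          Real.log_le_log (by positivity) h1
      _ = -A := Real.log_exp _
  have hloglb : -(A * m) ≤ Real.log (E / S) := by
    rw [← Real.log_exp (-(A * m))]
    apply Real.log_le_log (Real.exp_pos _)
    rw [le_div_iff₀ hS]; linarith
  set D := A - Real.log (E / S) with hDdef
  have hD2A : 2 * A ≤ D := by rw [hDdef]; linarith
  have hDpos : 0 < D := by linarith
  have hmle : m ≤ Real.sqrt T / Real.sqrt S := by
    rw [hmdef, div_le_div_iff₀ hS hsS]
    calc M * Real.sqrt S ≤ (Real.sqrt T * Real.sqrt S) * Real.sqrt S :=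
          mul_le_mul_of_nonneg_right hMle hsS.le
      _ = Real.sqrt T * S := by rw [mul_assoc, Real.mul_self_sqrt hS.le]
  have h1le : 1 ≤ Real.sqrt T / Real.sqrt S := by
    rw [le_div_iff₀ hsS, one_mul]
    exact Real.sqrt_le_sqrt hST
  have hDub : D ≤ 2 * A * (Real.sqrt T / Real.sqrt S) := by
    have h6 : A * m ≤ A * (Real.sqrt T / Real.sqrt S) :=
      mul_le_mul_of_nonneg_left hmle hA0.le
    have h7 : A * 1 ≤ A * (Real.sqrt T / Real.sqrt S) :=
      mul_le_mul_of_nonneg_left h1le hA0.le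
    have h8 : D ≤ A + A * m := by rw [hDdef]; linarith
    linarith
  rw [le_div_iff₀ hDpos]
  calc Real.sqrt S * D ≤ Real.sqrt S * (2 * A * (Real.sqrt T / Real.sqrt S)) :=
        mul_le_mul_of_nonneg_left hDub hsS.le
    _ = 2 * Real.sqrt T * A := by field_simp
end

section
/- Let m ∈ ℝ, let ω₁ be convex decreasing on (m,∞) with ω₁(∞)=0 and ω₂ convex increasing with ω₂(∞)=∞, and let 1 ≤ p < ∞. Define Ψ_p(t) = (ω₂⁻¹(t))^{1/p} for t > ω₂(m) and Φ_p(t) = 1/(ω₁⁻¹(t))^{1/p} for t ∈ (0, ω₁(m)), Φ_p(0)=0. If 1/(ω₁⁻¹)^{1/p} is concave on (0, ω₁(m)), then (Φ_p, Ψ_p) satisfies the admissibility hypotheses and H_{Φ_p,Ψ_p}(t) = 1/(ω₂ ∘ ω₁⁻¹)(t), i.e. (Φ_p, Ψ_p) is an optimal pair for (ω₁, ω₂). -/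
open Set Function Filter Topology

/-- Proposition 3.4: with `ω₁` convex decreasing (`ω₁(∞)=0`, `ω₁(m)=L₁`), `ω₂` convex
increasing (`ω₂(∞)=∞`, `ω₂(m)=L₂`), `p ≥ 1`, `Ψ_p(t) = (ω₂⁻¹ t)^{1/p}` on `(L₂,∞)` and
`Φ_p(t) = 1/(ω₁⁻¹ t)^{1/p}` on `(0,L₁)`: if `1/(ω₁⁻¹)^{1/p}` is concave on `(0,L₁)`,
then `(Φ_p, Ψ_p)` satisfies (2.7)–(2.9) and
`H_{Φ_p,Ψ_p}(t) = 1/(ω₂ ∘ ω₁⁻¹)(t)` on `(0,L₁)`; i.e. `(Φ_p, Ψ_p)` is an optimal pair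
for `(ω₁, ω₂)`. -/
theorem stmt14 (m : ℝ) (ω₁ ω₂ : ℝ → ℝ) (L₁ L₂ : ℝ) (p : ℝ) (hp : 1 ≤ p)
    (hω₁pos : ∀ t ∈ Ioi m, 0 < ω₁ t ∧ ω₁ t < L₁)
    (hω₁conv : ConvexOn ℝ (Ioi m) ω₁)
    (hω₁anti : StrictAntiOn ω₁ (Ioi m))
    (hω₁lim : Tendsto ω₁ atTop (nhds 0))
    (hω₁m : Tendsto ω₁ (nhdsWithin m (Ioi m)) (nhds L₁))
    (hω₂pos : ∀ t ∈ Ioi m, 0 < ω₂ t)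
    (hω₂conv : ConvexOn ℝ (Ioi m) ω₂)
    (hω₂mono : StrictMonoOn ω₂ (Ioi m))
    (hω₂lim : Tendsto ω₂ atTop atTop)
    (hω₂m : Tendsto ω₂ (nhdsWithin m (Ioi m)) (nhds L₂))
    (hconc : ConcaveOn ℝ (Ioo (0 : ℝ) L₁)
      (fun t => 1 / (Function.invFunOn ω₁ (Ioi m) t) ^ (1 / p))) :
    -- `Φ_p` satisfies (2.7)
    (StrictMonoOn (fun t => 1 / (Function.invFunOn ω₁ (Ioi m) t) ^ (1 / p))
        (Ioo (0 : ℝ) L₁) ∧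
      ConcaveOn ℝ (Ioo (0 : ℝ) L₁)
        (fun t => 1 / (Function.invFunOn ω₁ (Ioi m) t) ^ (1 / p)) ∧
      Tendsto (fun t => 1 / (Function.invFunOn ω₁ (Ioi m) t) ^ (1 / p))
        (nhdsWithin 0 (Ioi 0)) (nhds 0)) ∧
    -- `Ψ_p` satisfies (2.8)
    (StrictMonoOn (fun t => (Function.invFunOn ω₂ (Ioi m) t) ^ (1 / p)) (Ioi L₂) ∧
      ConcaveOn ℝ (Ioi L₂) (fun t => (Function.invFunOn ω₂ (Ioi m) t) ^ (1 / p)) ∧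
      Tendsto (fun t => (Function.invFunOn ω₂ (Ioi m) t) ^ (1 / p)) atTop atTop) ∧
    -- (2.9)
    (∀ t ∈ Ioi m,
      1 ≤ (1 / (Function.invFunOn ω₁ (Ioi m) (ω₁ t)) ^ (1 / p)) *
            (Function.invFunOn ω₂ (Ioi m) (ω₂ t)) ^ (1 / p)) ∧
    -- optimality: `H_{Φ_p,Ψ_p} = 1/(ω₂ ∘ ω₁⁻¹)`
    (∀ t ∈ Ioo (0 : ℝ) L₁,
      1 / Function.invFunOn (fun s => (Function.invFunOn ω₂ (Ioi m) s) ^ (1 / p))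
            (Ioi L₂) (1 / (1 / (Function.invFunOn ω₁ (Ioi m) t) ^ (1 / p))) =
        1 / ω₂ (Function.invFunOn ω₁ (Ioi m) t)) := by
  have hp0 : (0:ℝ) < p := lt_of_lt_of_le one_pos hp
  have hq0 : (0:ℝ) < 1 / p := by positivity
  have hq1 : 1 / p ≤ 1 := by rw [div_le_one hp0]; exact hp
  set g := Function.invFunOn ω₁ (Ioi m) with hgdef
  set h := Function.invFunOn ω₂ (Ioi m) with hhdef
  have hcont₁ : ContinuousOn ω₁ (Ioi m) := hω₁conv.continuousOn isOpen_Ioi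
  have hcont₂ : ContinuousOn ω₂ (Ioi m) := hω₂conv.continuousOn isOpen_Ioi
  have hinj₁ : InjOn ω₁ (Ioi m) := hω₁anti.injOn
  have hinj₂ : InjOn ω₂ (Ioi m) := hω₂mono.injOn
  have hg_eq : ∀ x ∈ Ioi m, g (ω₁ x) = x := fun x hx => hinj₁.leftInvOn_invFunOn hx
  have hh_eq : ∀ x ∈ Ioi m, h (ω₂ x) = x := fun x hx => hinj₂.leftInvOn_invFunOn hx
  -- surjectivity of ω₁ onto (0, L₁)
  have hsurj₁ : ∀ y ∈ Ioo (0:ℝ) L₁, ∃ x ∈ Ioi m, ω₁ x = y := by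
    rintro y ⟨hy0, hyL⟩
    have ha : ∀ᶠ z in nhdsWithin m (Ioi m), y < ω₁ z := hω₁m.eventually_const_lt hyL
    obtain ⟨a, hay, ham⟩ := (ha.and eventually_mem_nhdsWithin).exists
    have hb : ∀ᶠ z in atTop, ω₁ z < y := hω₁lim.eventually_lt_const hy0
    obtain ⟨b, hby, hab⟩ := (hb.and (eventually_ge_atTop (a + 1))).exists
    have hab' : a ≤ b := by linarith
    have hIcc : Icc a b ⊆ Ioi m := fun z hz => lt_of_lt_of_le ham hz.1
    obtain ⟨x, hxab, hxy⟩ :=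
      intermediate_value_Icc' hab' (hcont₁.mono hIcc) ⟨hby.le, hay.le⟩
    exact ⟨x, hIcc hxab, hxy⟩
  have hgy : ∀ y ∈ Ioo (0:ℝ) L₁, g y ∈ Ioi m ∧ ω₁ (g y) = y := fun y hy =>
    Function.invFunOn_pos (hsurj₁ y hy)
  have hganti : StrictAntiOn g (Ioo (0:ℝ) L₁) := by
    intro s hs t ht hst
    rcases lt_trichotomy (g t) (g s) with hc | hc | hc
    · exact hc
    · exfalso
      have h2 : ω₁ (g t) = ω₁ (g s) := by rw [hc]
      rw [(hgy t ht).2, (hgy s hs).2] at h2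
      linarith
    · exfalso
      have h2 := hω₁anti (hgy s hs).1 (hgy t ht).1 hc
      rw [(hgy t ht).2, (hgy s hs).2] at h2
      linarith
  -- positivity of g on (0, L₁)
  have hgpos : ∀ t ∈ Ioo (0:ℝ) L₁, 0 < g t := by
    intro t₀ ht₀
    by_contra hcon
    push_neg at hcon
    set x₁ : ℝ := max 1 (m + 1) with hx₁def
    have hx₁m : x₁ ∈ Ioi m := lt_of_lt_of_le (by linarith : m < m + 1) (le_max_right _ _)
    have hx₁1 : (1:ℝ) ≤ x₁ := le_max_left _ _
    set t₁ : ℝ := ω₁ x₁ with ht₁def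
    have ht₁ : t₁ ∈ Ioo (0:ℝ) L₁ := ⟨(hω₁pos x₁ hx₁m).1, (hω₁pos x₁ hx₁m).2⟩
    have hgt₁ : g t₁ = x₁ := hg_eq x₁ hx₁m
    have ht₁lt : t₁ < t₀ := by
      by_contra hle
      push_neg at hle
      rcases eq_or_lt_of_le hle with heq | hlt
      · rw [heq, hgt₁] at hcon; linarith
      · have h2 := hganti ht₀ ht₁ hlt
        rw [hgt₁] at h2
        linarith
    set a : ℝ := t₁ / 2 with hadef
    have ha : a ∈ Ioo (0:ℝ) L₁ := ⟨by linarith [ht₁.1], by linarith [ht₁.1, ht₁.2]⟩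
    have hat₁ : a < t₁ := by linarith [ht₁.1]
    have hga : x₁ ≤ g a := by
      have h2 := hganti ha ht₁ hat₁
      rw [hgt₁] at h2
      exact h2.le
    have hgapos : 0 < g a := lt_of_lt_of_le (by linarith) hga
    have hΦa : 0 < 1 / (g a) ^ (1/p) := by positivity
    have hgt₁pos : 0 < g t₁ := by rw [hgt₁]; linarith
    have hΦt₁ : 0 < 1 / (g t₁) ^ (1/p) := by positivity
    set M : ℝ := (1 / (g t₁) ^ (1/p)) * (t₀ - a) / (t₁ - a) with hMdef
    have hMpos : 0 < M := div_pos (mul_pos hΦt₁ (by linarith)) (by linarith)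
    set K : ℝ := max M 1 with hKdef
    have hKM : M ≤ K := le_max_left _ _
    have hK1 : (1:ℝ) ≤ K := le_max_right _ _
    set ε : ℝ := min (1/2) ((K + 1) ^ (-p)) with hεdef
    have hεpos : 0 < ε := lt_min (by norm_num) (Real.rpow_pos_of_pos (by linarith) _)
    have hgt₀m : m < g t₀ := (hgy t₀ ht₀).1
    have hεm : ε ∈ Ioi m := by
      simp only [mem_Ioi]; linarith
    set t : ℝ := ω₁ ε with htdef
    have ht : t ∈ Ioo (0:ℝ) L₁ := ⟨(hω₁pos ε hεm).1, (hω₁pos ε hεm).2⟩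
    have hgt : g t = ε := hg_eq ε hεm
    have ht₁t : t₁ < t := by
      have hεx₁ : ε < x₁ := lt_of_le_of_lt (min_le_left _ _) (by linarith)
      exact hω₁anti hεm hx₁m hεx₁
    have htt₀ : t < t₀ := by
      have hg0ε : g t₀ < ε := lt_of_le_of_lt hcon hεpos
      have h2 := hω₁anti (hgy t₀ ht₀).1 hεm hg0ε
      rw [(hgy t₀ ht₀).2] at h2
      exact h2
    -- concavity bound: Φ t ≤ M
    have hta : a < t := lt_trans hat₁ ht₁t
    have htane : t - a ≠ 0 := by linarith
    have hlam0 : 0 ≤ (t - t₁) / (t - a) := div_nonneg (by linarith) (by linarith)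
    have hmu0 : 0 < (t₁ - a) / (t - a) := by
      apply div_pos <;> linarith
    have hsum : (t - t₁) / (t - a) + (t₁ - a) / (t - a) = 1 := by field_simp; ring
    have hkey := hconc.2 ha ht hlam0 hmu0.le hsum
    have hcomb : ((t - t₁) / (t - a)) • a + ((t₁ - a) / (t - a)) • t = t₁ := by
      simp only [smul_eq_mul]
      field_simp
      ring
    rw [hcomb] at hkey
    simp only [smul_eq_mul] at hkey
    -- from hkey : λ * Φ a + μ * Φ t ≤ Φ t₁
    have hΦtle : 1 / (g t) ^ (1/p) ≤ M := by
      have h4 : (t₁ - a) / (t - a) * (1 / (g t) ^ (1/p)) ≤ 1 / (g t₁) ^ (1/p) := by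
        linarith [mul_nonneg hlam0 hΦa.le]
      have h5 : (t₁ - a) * (1 / (g t) ^ (1/p)) ≤ 1 / (g t₁) ^ (1/p) * (t - a) := by
        rw [div_mul_eq_mul_div, div_le_iff₀ (by linarith : (0:ℝ) < t - a)] at h4
        exact h4
      rw [hMdef, le_div_iff₀ (by linarith : (0:ℝ) < t₁ - a)]
      nlinarith [hΦt₁]
    -- but Φ t = 1 / ε^{1/p} ≥ K + 1 > M
    have hεle : ε ≤ (K + 1) ^ (-p) := min_le_right _ _
    have hεq : ε ^ (1/p) ≤ (K + 1)⁻¹ := by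
      have h2 : ε ^ (1/p) ≤ ((K + 1) ^ (-p)) ^ (1/p) :=
        Real.rpow_le_rpow hεpos.le hεle hq0.le
      have hpp : -p * (1/p) = (-1:ℝ) := by field_simp
      rwa [← Real.rpow_mul (by linarith : (0:ℝ) ≤ K + 1), hpp,
        Real.rpow_neg_one] at h2
    have hΦtge : K + 1 ≤ 1 / (g t) ^ (1/p) := by
      rw [hgt]
      calc K + 1 = 1 / (K + 1)⁻¹ := by
            rw [one_div, inv_inv]
          _ ≤ 1 / ε ^ (1/p) :=
            one_div_le_one_div_of_le (Real.rpow_pos_of_pos hεpos _) hεq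
    linarith
  have hm0 : 0 ≤ m := by
    by_contra hm
    push_neg at hm
    have h1 : m / 2 ∈ Ioi m := by simp only [mem_Ioi]; linarith
    have h2 := hgpos (ω₁ (m/2)) ⟨(hω₁pos _ h1).1, (hω₁pos _ h1).2⟩
    rw [hg_eq _ h1] at h2
    linarith
  -- ω₂ is greater than L₂ on (m, ∞)
  have hω₂gtL : ∀ x ∈ Ioi m, L₂ < ω₂ x := by
    intro x hx
    have hx' : m < x := hx
    have hym : (m + x)/2 ∈ Ioi m := by simp only [mem_Ioi]; linarith
    have h1 : ∀ᶠ z in nhdsWithin m (Ioi m), ω₂ z ≤ ω₂ ((m + x)/2) := by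
      filter_upwards [Ioo_mem_nhdsGT_of_mem ⟨le_rfl, (by linarith : m < (m + x)/2)⟩] with z hz
      exact (hω₂mono hz.1 hym hz.2).le
    have h2 : L₂ ≤ ω₂ ((m + x)/2) := le_of_tendsto hω₂m h1
    exact lt_of_le_of_lt h2 (hω₂mono hym hx (by linarith))
  -- surjectivity of ω₂ onto (L₂, ∞)
  have hsurj₂ : ∀ y ∈ Ioi L₂, ∃ x ∈ Ioi m, ω₂ x = y := by
    intro y hy
    have ha : ∀ᶠ z in nhdsWithin m (Ioi m), ω₂ z < y := hω₂m.eventually_lt_const hy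
    obtain ⟨a, hay, ham⟩ := (ha.and eventually_mem_nhdsWithin).exists
    have hb : ∀ᶠ z in atTop, y ≤ ω₂ z := hω₂lim.eventually_ge_atTop y
    obtain ⟨b, hby, hab⟩ := (hb.and (eventually_ge_atTop (a + 1))).exists
    have hab' : a ≤ b := by linarith
    have hIcc : Icc a b ⊆ Ioi m := fun z hz => lt_of_lt_of_le ham hz.1
    obtain ⟨x, hxab, hxy⟩ :=
      intermediate_value_Icc hab' (hcont₂.mono hIcc) ⟨hay.le, hby⟩
    exact ⟨x, hIcc hxab, hxy⟩
  have hhy : ∀ y ∈ Ioi L₂, h y ∈ Ioi m ∧ ω₂ (h y) = y := fun y hy =>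
    Function.invFunOn_pos (hsurj₂ y hy)
  have hhmono : StrictMonoOn h (Ioi L₂) := by
    intro s hs t ht hst
    rcases lt_trichotomy (h s) (h t) with hc | hc | hc
    · exact hc
    · exfalso
      have h2 : ω₂ (h s) = ω₂ (h t) := by rw [hc]
      rw [(hhy s hs).2, (hhy t ht).2] at h2
      linarith
    · exfalso
      have h2 := hω₂mono (hhy t ht).1 (hhy s hs).1 hc
      rw [(hhy s hs).2, (hhy t ht).2] at h2
      linarith
  have hhpos : ∀ y ∈ Ioi L₂, 0 < h y := fun y hy =>
    lt_of_le_of_lt hm0 (hhy y hy).1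
  -- Part 1a
  have part1a : StrictMonoOn (fun t => 1 / (g t) ^ (1/p)) (Ioo (0:ℝ) L₁) := by
    intro s hs t ht hst
    have h1 : g t < g s := hganti hs ht hst
    have h2 : 0 < g t := hgpos t ht
    have h3 : (g t) ^ (1/p) < (g s) ^ (1/p) := Real.rpow_lt_rpow h2.le h1 hq0
    exact one_div_lt_one_div_of_lt (Real.rpow_pos_of_pos h2 _) h3
  -- Part 1c
  have hgtop : Tendsto g (nhdsWithin 0 (Ioi 0)) atTop := by
    rw [tendsto_atTop]
    intro N
    have hx₁m : max N (m+1) ∈ Ioi m := lt_of_lt_of_le (by linarith : m < m + 1) (le_max_right _ _)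
    have hδ : ω₁ (max N (m+1)) ∈ Ioo (0:ℝ) L₁ :=
      ⟨(hω₁pos _ hx₁m).1, (hω₁pos _ hx₁m).2⟩
    filter_upwards [Ioo_mem_nhdsGT_of_mem ⟨le_rfl, hδ.1⟩] with t htIoo
    have htmem : t ∈ Ioo (0:ℝ) L₁ := ⟨htIoo.1, htIoo.2.trans hδ.2⟩
    have h2 := hganti htmem hδ htIoo.2
    rw [hg_eq _ hx₁m] at h2
    exact le_trans (le_max_left _ _) h2.le
  have part1c : Tendsto (fun t => 1 / (g t) ^ (1/p)) (nhdsWithin 0 (Ioi 0)) (nhds 0) := by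
    have h1 : Tendsto (fun t => (g t) ^ (1/p)) (nhdsWithin 0 (Ioi 0)) atTop :=
      (tendsto_rpow_atTop hq0).comp hgtop
    have h2 := h1.inv_tendsto_atTop
    simp only [Pi.inv_def] at h2
    simpa [one_div] using h2
  -- Part 2a
  have part2a : StrictMonoOn (fun y => (h y) ^ (1/p)) (Ioi L₂) := by
    intro s hs t ht hst
    exact Real.rpow_lt_rpow (hhpos s hs).le (hhmono hs ht hst) hq0
  -- Part 2b
  have part2b : ConcaveOn ℝ (Ioi L₂) (fun y => (h y) ^ (1/p)) := by
    refine ⟨convex_Ioi _, ?_⟩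
    intro x hx y hy aa bb haa hbb hab
    simp only [smul_eq_mul]
    have hu := hhy x hx
    have hv := hhy y hy
    have hcomb : aa * h x + bb * h y ∈ Ioi m := by
      have := (convex_Ioi m) hu.1 hv.1 haa hbb hab
      simpa [smul_eq_mul] using this
    have hcomb2 : aa * x + bb * y ∈ Ioi L₂ := by
      have := (convex_Ioi L₂) hx hy haa hbb hab
      simpa [smul_eq_mul] using this
    have hω₂le : ω₂ (aa * h x + bb * h y) ≤ aa * x + bb * y := by
      have := hω₂conv.2 hu.1 hv.1 haa hbb hab
      simp only [smul_eq_mul] at this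
      rwa [hu.2, hv.2] at this
    have hmono : aa * h x + bb * h y ≤ h (aa * x + bb * y) := by
      have h2 := hhmono.monotoneOn (hω₂gtL _ hcomb) hcomb2 hω₂le
      rwa [hh_eq _ hcomb] at h2
    have hnn : (0:ℝ) ≤ aa * h x + bb * h y := le_trans hm0 (le_of_lt hcomb)
    calc aa * (h x) ^ (1/p) + bb * (h y) ^ (1/p)
        ≤ (aa * h x + bb * h y) ^ (1/p) := by
          have := (Real.concaveOn_rpow hq0.le hq1).2
            (mem_Ici.mpr (le_trans hm0 hu.1.le)) (mem_Ici.mpr (le_trans hm0 hv.1.le))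
            haa hbb hab
          simpa [smul_eq_mul] using this
      _ ≤ (h (aa * x + bb * y)) ^ (1/p) := Real.rpow_le_rpow hnn hmono hq0.le
  -- Part 2c
  have hhtop : Tendsto h atTop atTop := by
    rw [tendsto_atTop]
    intro N
    have hx₁m : max N (m+1) ∈ Ioi m := lt_of_lt_of_le (by linarith : m < m + 1) (le_max_right _ _)
    have hA : ω₂ (max N (m+1)) ∈ Ioi L₂ := hω₂gtL _ hx₁m
    filter_upwards [eventually_ge_atTop (ω₂ (max N (m+1)) + 1)] with y hy
    have hyI : y ∈ Ioi L₂ := mem_Ioi.mpr (by have := mem_Ioi.mp hA; linarith)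
    have h2 := hhmono hA hyI (by linarith [mem_Ioi.mp hA])
    rw [hh_eq _ hx₁m] at h2
    exact le_trans (le_max_left _ _) h2.le
  have part2c : Tendsto (fun y => (h y) ^ (1/p)) atTop atTop :=
    (tendsto_rpow_atTop hq0).comp hhtop
  -- Part 3
  have part3 : ∀ t ∈ Ioi m, 1 ≤ (1 / (g (ω₁ t)) ^ (1/p)) * (h (ω₂ t)) ^ (1/p) := by
    intro t ht
    rw [hg_eq t ht, hh_eq t ht,
      one_div_mul_cancel (ne_of_gt (Real.rpow_pos_of_pos (lt_of_le_of_lt hm0 ht) _))]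
  -- Part 4
  have part4 : ∀ t ∈ Ioo (0:ℝ) L₁,
      1 / Function.invFunOn (fun s => (h s) ^ (1/p)) (Ioi L₂) (1 / (1 / (g t) ^ (1/p))) =
        1 / ω₂ (g t) := by
    intro t ht
    have hx := (hgy t ht).1
    have hΨinj : InjOn (fun s => (h s) ^ (1/p)) (Ioi L₂) := part2a.injOn
    rw [one_div_one_div]
    have h1 : (g t) ^ (1/p) = (fun s => (h s) ^ (1/p)) (ω₂ (g t)) := by
      simp only
      rw [hh_eq _ hx]
    rw [h1, hΨinj.leftInvOn_invFunOn (hω₂gtL _ hx)]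
  exact ⟨⟨part1a, hconc, part1c⟩, ⟨part2a, part2b, part2c⟩, part3, part4⟩
end

section
/- Let (u_n)_{n∈ℕ} ⊂ (0,∞) with liminf u_n = 0, let ω₁ be its lower convex envelope, let p ≥ 1, α ∈ [0,1], and set ω₂(t) = (t+α)ᵖ for t ≥ 0, Ψ(t) = t^{1/p} − α for t ≥ αᵖ, φ(t) = ω₁(t)/tᵖ and Φ(t) = 1/φ⁻¹(t) for t > 0. Then (ω₁, ω₂, Φ, Ψ) is an admissible quadruplet and H_{Φ,Ψ}(t) = 1/(φ⁻¹(t) + α)ᵖ for every t > 0. -/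
set_option maxHeartbeats 1000000

open Set Function Filter Topology

lemma omega_combo (ω : ℝ → ℝ) (p : ℝ) (hp : 1 ≤ p)
    (hpos : ∀ t ∈ Ici (0:ℝ), 0 < ω t)
    (hconv : ConvexOn ℝ (Ici (0:ℝ)) ω)
    (hanti : StrictAntiOn ω (Ici (0:ℝ)))
    {x y lam mu : ℝ} (hx : 0 < x) (hy : 0 < y) (hlam : 0 < lam) (hmu : 0 < mu)
    (hsum : lam + mu = 1) :
    ω ((lam / x + mu / y)⁻¹) / ((lam / x + mu / y)⁻¹) ^ p
      ≤ lam * (ω x / x ^ p) + mu * (ω y / y ^ p) := by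
  have hS : 0 < lam / x + mu / y := by positivity
  set z : ℝ := (lam / x + mu / y)⁻¹ with hzdef
  have hz : 0 < z := by positivity
  set X : ℝ := x ^ p with hXdef
  set Y : ℝ := y ^ p with hYdef
  set Z : ℝ := z ^ p with hZdef
  have hX : 0 < X := Real.rpow_pos_of_pos hx p
  have hY : 0 < Y := Real.rpow_pos_of_pos hy p
  have hZ : 0 < Z := Real.rpow_pos_of_pos hz p
  set X1 : ℝ := x ^ (p - 1) with hX1def
  set Y1 : ℝ := y ^ (p - 1) with hY1def
  have hX1 : 0 < X1 := Real.rpow_pos_of_pos hx _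
  have hY1 : 0 < Y1 := Real.rpow_pos_of_pos hy _
  have hXeq : X = X1 * x := by
    rw [hX1def, Real.rpow_sub hx, Real.rpow_one, hXdef]
    field_simp
  have hYeq : Y = Y1 * y := by
    rw [hY1def, Real.rpow_sub hy, Real.rpow_one, hYdef]
    field_simp
  -- Step A : 1 ≤ lam*Z/X + mu*Z/Y
  have hA : 1 ≤ lam * Z / X + mu * Z / Y := by
    have h := (convexOn_rpow hp).2 (mem_Ici.2 (le_of_lt (inv_pos.2 hx)))
      (mem_Ici.2 (le_of_lt (inv_pos.2 hy))) hlam.le hmu.le hsum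
    simp only [smul_eq_mul] at h
    have e1 : lam * x⁻¹ + mu * y⁻¹ = z⁻¹ := by
      rw [hzdef, inv_inv]; ring
    rw [e1, Real.inv_rpow hz.le, Real.inv_rpow hx.le, Real.inv_rpow hy.le] at h
    have h2 := mul_le_mul_of_nonneg_left h hZ.le
    have e2 : Z * Z⁻¹ = 1 := mul_inv_cancel₀ hZ.ne'
    have e3 : Z * (lam * X⁻¹ + mu * Y⁻¹) = lam * Z / X + mu * Z / Y := by
      field_simp
    rw [e2, e3] at h2
    exact h2
  -- key monotonicity fact
  have hkey : 0 ≤ (X1 - Y1) * (x - y) := by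
    rcases le_total x y with hxy | hxy
    · have : X1 ≤ Y1 := Real.rpow_le_rpow hx.le hxy (by linarith)
      nlinarith
    · have : Y1 ≤ X1 := Real.rpow_le_rpow hy.le hxy (by linarith)
      nlinarith
  set w₁ : ℝ := lam * Z / X with hw1
  set w₂ : ℝ := mu * Z / Y with hw2
  have hw₁ : 0 < w₁ := by positivity
  have hw₂ : 0 < w₂ := by positivity
  have hW : 0 < w₁ + w₂ := by positivity
  have hLx : 0 < lam * y + mu * x := by positivity
  -- Step B : w₁*x + w₂*y ≤ z*(w₁+w₂)
  have hB' : (lam * Y1 + mu * X1) * (lam * y + mu * x) ≤ lam * Y1 * y + mu * X1 * x := by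
    have e : lam * Y1 * y + mu * X1 * x - (lam * Y1 + mu * X1) * (lam * y + mu * x)
        = lam * mu * ((X1 - Y1) * (x - y)) := by
      have hmu1 : mu = 1 - lam := by linarith
      rw [hmu1]; ring
    nlinarith [mul_nonneg (mul_pos hlam hmu).le hkey]
  have hz' : z = x * y / (lam * y + mu * x) := by
    rw [hzdef]
    have hd : lam / x + mu / y = (lam * y + mu * x) / (x * y) := by
      field_simp
    rw [hd, inv_div]
  have e2 : z * (w₁ + w₂) - (w₁ * x + w₂ * y)
      = Z * (lam * Y1 * y + mu * X1 * x - (lam * Y1 + mu * X1) * (lam * y + mu * x))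
        / ((lam * y + mu * x) * (X1 * Y1)) := by
    rw [hw1, hw2, hXeq, hYeq, hz']
    field_simp
  have hB : w₁ * x + w₂ * y ≤ z * (w₁ + w₂) := by
    have hnum : 0 ≤ Z * (lam * Y1 * y + mu * X1 * x
        - (lam * Y1 + mu * X1) * (lam * y + mu * x)) := by
      have := sub_nonneg.2 hB'
      positivity
    have hden : (0:ℝ) < (lam * y + mu * x) * (X1 * Y1) := by positivity
    have := div_nonneg hnum hden.le
    linarith [e2, this]
  -- convexity at the mean point
  set m : ℝ := (w₁ * x + w₂ * y) / (w₁ + w₂) with hmdef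
  have hm : 0 < m := by positivity
  have hmz : m ≤ z := by
    rw [hmdef, div_le_iff₀ hW]
    linarith [hB]
  have hωa := hconv.2 (mem_Ici.2 hx.le) (mem_Ici.2 hy.le)
    (by positivity : (0:ℝ) ≤ w₁ / (w₁ + w₂)) (by positivity : (0:ℝ) ≤ w₂ / (w₁ + w₂))
    (by field_simp)
  simp only [smul_eq_mul] at hωa
  have hmm : w₁ / (w₁ + w₂) * x + w₂ / (w₁ + w₂) * y = m := by
    rw [hmdef]; field_simp
  rw [hmm] at hωa
  have h1 : ω z ≤ ω m := by
    rcases eq_or_lt_of_le hmz with h | h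
    · rw [h]
    · exact (hanti (mem_Ici.2 hm.le) (mem_Ici.2 hz.le) h).le
  have h2 : ω m ≤ (w₁ + w₂) * ω m :=
    le_mul_of_one_le_left (hpos m (mem_Ici.2 hm.le)).le hA
  have h3 : (w₁ + w₂) * ω m ≤ w₁ * ω x + w₂ * ω y := by
    have h4 := mul_le_mul_of_nonneg_left hωa hW.le
    have e4 : (w₁ + w₂) * (w₁ / (w₁ + w₂) * ω x + w₂ / (w₁ + w₂) * ω y)
        = w₁ * ω x + w₂ * ω y := by field_simp
    rw [e4] at h4
    exact h4
  rw [div_le_iff₀ hZ]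
  have e5 : w₁ * ω x + w₂ * ω y = (lam * (ω x / X) + mu * (ω y / Y)) * Z := by
    rw [hw1, hw2]; field_simp [hX.ne', hY.ne']
  linarith [h1, h2, h3]

/-- Proposition 4.6: let `(u_n) ⊂ (0,∞)` with `liminf u_n = 0`, let `ω₁` be its lower
convex envelope (a positive, decreasing, convex function on `[0,∞)` with
`ω₁(n) ≤ u_n` and `ω₁(∞) = 0`), `p ≥ 1`, `α ∈ [0,1]`, `ω₂(t) = (t+α)ᵖ`,
`Ψ(t) = t^{1/p} - α`, `φ(t) = ω₁(t)/tᵖ` and `Φ(t) = 1/φ⁻¹(t)`.  Then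
`(ω₁, ω₂, Φ, Ψ)` is an admissible quadruplet and
`H_{Φ,Ψ}(t) = 1/(φ⁻¹(t)+α)ᵖ` for every `t > 0`. -/
theorem stmt17 (u : ℕ → ℝ) (hu : ∀ n, 0 < u n)
    (hliminf : Filter.liminf u Filter.atTop = 0)
    (ω₁ : ℝ → ℝ) (p α : ℝ) (hp : 1 ≤ p) (hα : α ∈ Icc (0 : ℝ) 1)
    -- `ω₁` is the lower convex envelope of `(u_n)`
    (henv : ∀ n : ℕ, 0 < ω₁ n ∧ ω₁ n ≤ u n)
    (hω₁pos : ∀ t ∈ Ici (0 : ℝ), 0 < ω₁ t)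
    (hω₁conv : ConvexOn ℝ (Ici (0 : ℝ)) ω₁)
    (hω₁anti : StrictAntiOn ω₁ (Ici (0 : ℝ)))
    (hω₁lim : Tendsto ω₁ atTop (nhds 0)) :
    -- `Φ` satisfies (2.7) on `(0,∞)`
    (StrictMonoOn
        (fun t => 1 / Function.invFunOn (fun s => ω₁ s / s ^ p) (Ioi 0) t)
        (Ioi (0 : ℝ)) ∧
      ConcaveOn ℝ (Ioi (0 : ℝ))
        (fun t => 1 / Function.invFunOn (fun s => ω₁ s / s ^ p) (Ioi 0) t) ∧
      Tendsto (fun t => 1 / Function.invFunOn (fun s => ω₁ s / s ^ p) (Ioi 0) t)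
        (nhdsWithin 0 (Ioi 0)) (nhds 0)) ∧
    -- `Ψ` satisfies (2.8) on `(α^p, ∞)`
    (StrictMonoOn (fun t : ℝ => t ^ (1 / p) - α) (Ioi (α ^ p)) ∧
      ConcaveOn ℝ (Ioi (α ^ p)) (fun t : ℝ => t ^ (1 / p) - α) ∧
      Tendsto (fun t : ℝ => t ^ (1 / p) - α) atTop atTop) ∧
    -- (2.9) holds on `(1,∞)`
    (∀ t ∈ Ioi (1 : ℝ),
      1 ≤ (1 / Function.invFunOn (fun s => ω₁ s / s ^ p) (Ioi 0) (ω₁ t)) *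
            (((t + α) ^ p) ^ (1 / p) - α)) ∧
    -- `t ↦ (1/t) H⁻¹(t)` is nondecreasing on `(0,1)`
    MonotoneOn (fun t : ℝ => (1 - α * t ^ (1 / p)) ^ (-p) * ω₁ (t ^ (-(1 / p)) - α))
      (Ioo (0 : ℝ) 1) ∧
    -- the formula for `H_{Φ,Ψ}`
    (∀ t ∈ Ioi (0 : ℝ),
      1 / Function.invFunOn (fun s : ℝ => s ^ (1 / p) - α) (Ioi (α ^ p))
          (1 / (1 / Function.invFunOn (fun s => ω₁ s / s ^ p) (Ioi 0) t)) =
        1 / (Function.invFunOn (fun s => ω₁ s / s ^ p) (Ioi 0) t + α) ^ p) := by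
  obtain ⟨hα0, hα1⟩ := hα
  have hp0 : (0:ℝ) < p := lt_of_lt_of_le one_pos hp
  set φ : ℝ → ℝ := fun s => ω₁ s / s ^ p with hφdef
  set g : ℝ → ℝ := Function.invFunOn φ (Ioi 0) with hgdef
  -- basic facts about φ
  have hφval : ∀ s : ℝ, φ s = ω₁ s / s ^ p := fun s => rfl
  have hφpos : ∀ s ∈ Ioi (0:ℝ), 0 < φ s := by
    intro s hs
    exact div_pos (hω₁pos s (mem_Ici.2 (le_of_lt hs))) (Real.rpow_pos_of_pos hs p)
  have hφanti : StrictAntiOn φ (Ioi (0:ℝ)) := by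
    intro a ha b hb hab
    have ha0 : (0:ℝ) < a := ha
    have hb0 : (0:ℝ) < b := hb
    have h1 : ω₁ b < ω₁ a := hω₁anti (mem_Ici.2 ha0.le) (mem_Ici.2 hb0.le) hab
    have h2 : a ^ p < b ^ p := Real.rpow_lt_rpow ha0.le hab hp0
    have hbp : (0:ℝ) < b ^ p := Real.rpow_pos_of_pos hb0 p
    have hap : (0:ℝ) < a ^ p := Real.rpow_pos_of_pos ha0 p
    have hωa : 0 < ω₁ a := hω₁pos a ha0.le
    rw [hφval, hφval, div_lt_div_iff₀ hbp hap]
    nlinarith [mul_lt_mul_of_pos_right h1 hap, mul_lt_mul_of_pos_left h2 hωa]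
  have hφcont : ContinuousOn φ (Ioi (0:ℝ)) := by
    have hc := hω₁conv.continuousOn_interior
    rw [interior_Ici] at hc
    exact hc.div
      (continuousOn_id.rpow_const (fun x hx => Or.inl (ne_of_gt hx)))
      (fun x hx => (Real.rpow_pos_of_pos hx p).ne')
  -- surjectivity of φ onto (0, ∞)
  have hφsurj : ∀ b ∈ Ioi (0:ℝ), ∃ a ∈ Ioi (0:ℝ), φ a = b := by
    intro b hb
    have hb0 : (0:ℝ) < b := hb
    have hω1 : 0 < ω₁ 1 := hω₁pos 1 (by norm_num)
    set r : ℝ := (ω₁ 1 / b) ^ (1/p) with hr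
    have hrpos : 0 < r := Real.rpow_pos_of_pos (div_pos hω1 hb0) _
    set a : ℝ := min 1 r / 2 with ha
    have hmin : 0 < min 1 r := lt_min one_pos hrpos
    have ha0 : 0 < a := by positivity
    have ha1 : a < 1 := by
      have := min_le_left 1 r; rw [ha]; linarith
    have har : a < r := by
      have := min_le_right 1 r; rw [ha]; linarith
    have hap : a ^ p < ω₁ 1 / b := by
      have h2 := Real.rpow_lt_rpow ha0.le har hp0
      rwa [hr, one_div, Real.rpow_inv_rpow (le_of_lt (div_pos hω1 hb0)) hp0.ne'] at h2
    have hφa : b < φ a := by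
      have h1 : ω₁ 1 ≤ ω₁ a :=
        (hω₁anti (mem_Ici.2 ha0.le) (mem_Ici.2 zero_le_one) ha1).le
      rw [hφval, lt_div_iff₀ (Real.rpow_pos_of_pos ha0 p)]
      calc b * a ^ p < b * (ω₁ 1 / b) := by
            exact mul_lt_mul_of_pos_left hap hb0
      _ = ω₁ 1 := by field_simp
      _ ≤ ω₁ a := h1
    obtain ⟨c, hcb, hc1⟩ : ∃ c : ℝ, ω₁ c < b ∧ 1 ≤ c := by
      have h1 : ∀ᶠ t in atTop, ω₁ t < b := hω₁lim.eventually_lt_const hb0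
      obtain ⟨c, hc⟩ := (h1.and (eventually_ge_atTop 1)).exists
      exact ⟨c, hc.1, hc.2⟩
    have hc0 : (0:ℝ) < c := lt_of_lt_of_le one_pos hc1
    have hφc : φ c < b := by
      have h1 : (1:ℝ) ≤ c ^ p := by
        calc (1:ℝ) = 1 ^ p := (Real.one_rpow p).symm
        _ ≤ c ^ p := Real.rpow_le_rpow zero_le_one hc1 hp0.le
      calc φ c = ω₁ c / c ^ p := hφval c
      _ ≤ ω₁ c := div_le_self (hω₁pos c hc0.le).le h1
      _ < b := hcb
    have hac : a < c := by
      by_contra h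
      push_neg at h
      rcases eq_or_lt_of_le h with h' | h'
      · rw [h'] at hφc; linarith
      · have := hφanti (mem_Ioi.2 hc0) (mem_Ioi.2 ha0) h'
        linarith
    have hIcc : Icc a c ⊆ Ioi (0:ℝ) := fun x hx => lt_of_lt_of_le ha0 hx.1
    have hIVT := intermediate_value_Icc' hac.le (hφcont.mono hIcc)
    obtain ⟨x, hx, hxeq⟩ := hIVT ⟨hφc.le, hφa.le⟩
    exact ⟨x, lt_of_lt_of_le ha0 hx.1, hxeq⟩
  -- facts about g
  have hgmem : ∀ t ∈ Ioi (0:ℝ), g t ∈ Ioi (0:ℝ) := by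
    intro t ht
    exact Function.invFunOn_mem (hφsurj t ht)
  have hgpos : ∀ t ∈ Ioi (0:ℝ), 0 < g t := hgmem
  have hgeq : ∀ t ∈ Ioi (0:ℝ), φ (g t) = t := by
    intro t ht
    exact Function.invFunOn_eq (hφsurj t ht)
  have hgleft : ∀ x ∈ Ioi (0:ℝ), g (φ x) = x := by
    intro x hx
    exact hφanti.injOn.leftInvOn_invFunOn hx
  have hganti : ∀ s ∈ Ioi (0:ℝ), ∀ t ∈ Ioi (0:ℝ), s < t → g t < g s := by
    intro s hs t ht hst
    by_contra h
    push_neg at h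
    rcases eq_or_lt_of_le h with h' | h'
    · have := hgeq s hs
      rw [h', hgeq t ht] at this
      exact absurd this (ne_of_gt hst)
    · have h2 := hφanti (hgmem s hs) (hgmem t ht) h'
      rw [hgeq s hs, hgeq t ht] at h2
      exact absurd hst (not_lt.2 h2.le)
  -- Part 1a: strict monotonicity of Φ
  have part1a : StrictMonoOn (fun t => 1 / g t) (Ioi (0:ℝ)) := by
    intro s hs t ht hst
    have h1 := hganti s hs t ht hst
    exact one_div_lt_one_div_of_lt (hgpos t ht) h1
  -- Part 1b: concavity of Φ
  have part1b : ConcaveOn ℝ (Ioi (0:ℝ)) (fun t => 1 / g t) := by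
    refine ⟨convex_Ioi 0, ?_⟩
    intro a ha b hb la mu hla hmu hsum
    simp only [smul_eq_mul]
    rcases eq_or_lt_of_le hla with h0 | hla0
    · have hmu1 : mu = 1 := by linarith
      rw [← h0, hmu1]
      simp
    rcases eq_or_lt_of_le hmu with h0 | hmu0
    · have hla1 : la = 1 := by linarith
      rw [← h0, hla1]
      simp
    have hx : 0 < g a := hgpos a ha
    have hy : 0 < g b := hgpos b hb
    have hc : la * a + mu * b ∈ Ioi (0:ℝ) :=
      mem_Ioi.2 (add_pos (mul_pos hla0 ha) (mul_pos hmu0 hb))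
    have hzz : (la / g a + mu / g b)⁻¹ ∈ Ioi (0:ℝ) := by
      have : 0 < la / g a + mu / g b := by positivity
      exact mem_Ioi.2 (inv_pos.2 this)
    have hcombo := omega_combo ω₁ p hp hω₁pos hω₁conv hω₁anti hx hy hla0 hmu0 hsum
    have h2 : φ ((la / g a + mu / g b)⁻¹) ≤ la * a + mu * b := by
      calc φ ((la / g a + mu / g b)⁻¹)
          = ω₁ ((la / g a + mu / g b)⁻¹) / ((la / g a + mu / g b)⁻¹) ^ p := hφval _
      _ ≤ la * (ω₁ (g a) / (g a) ^ p) + mu * (ω₁ (g b) / (g b) ^ p) := hcombo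
      _ = la * φ (g a) + mu * φ (g b) := by rw [hφval, hφval]
      _ = la * a + mu * b := by rw [hgeq a ha, hgeq b hb]
    have h5 : g (la * a + mu * b) ≤ (la / g a + mu / g b)⁻¹ := by
      rcases eq_or_lt_of_le h2 with h | h
      · rw [← h, hgleft _ hzz]
      · have h6 := hganti (φ ((la / g a + mu / g b)⁻¹)) (hφpos _ hzz) _ hc h
        rw [hgleft _ hzz] at h6
        exact h6.le
    have h6 : 1 / ((la / g a + mu / g b)⁻¹) ≤ 1 / g (la * a + mu * b) :=
      one_div_le_one_div_of_le (hgpos _ hc) h5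
    rw [one_div, inv_inv] at h6
    calc la * (1 / g a) + mu * (1 / g b) = la / g a + mu / g b := by ring
    _ ≤ 1 / g (la * a + mu * b) := h6
  -- Part 1c: limit of Φ at 0+
  have hgtop : Tendsto g (nhdsWithin 0 (Ioi 0)) atTop := by
    rw [tendsto_atTop]
    intro M
    set M' : ℝ := max M 1 with hM'def
    have hM' : (0:ℝ) < M' := lt_of_lt_of_le one_pos (le_max_right _ _)
    have hφM' : 0 < φ M' := hφpos M' (mem_Ioi.2 hM')
    filter_upwards [mem_nhdsWithin_of_mem_nhds (Iio_mem_nhds hφM'), self_mem_nhdsWithin]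
      with t ht1 ht2
    have h1 := hganti t ht2 (φ M') (mem_Ioi.2 hφM') ht1
    rw [hgleft M' (mem_Ioi.2 hM')] at h1
    calc M ≤ M' := le_max_left _ _
    _ ≤ g t := h1.le
  have part1c : Tendsto (fun t => 1 / g t) (nhdsWithin 0 (Ioi 0)) (nhds 0) := by
    simp only [one_div]
    exact tendsto_inv_atTop_zero.comp hgtop
  -- Part 2: properties of Ψ
  have hαp : (0:ℝ) ≤ α ^ p := Real.rpow_nonneg hα0 p
  have part2a : StrictMonoOn (fun t : ℝ => t ^ (1 / p) - α) (Ioi (α ^ p)) := by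
    intro a ha b hb hab
    have ha0 : (0:ℝ) ≤ a := le_trans hαp (le_of_lt ha)
    have := Real.rpow_lt_rpow ha0 hab (by positivity : (0:ℝ) < 1 / p)
    simpa using sub_lt_sub_right this α
  have part2b : ConcaveOn ℝ (Ioi (α ^ p)) (fun t : ℝ => t ^ (1 / p) - α) := by
    have h1 : ConcaveOn ℝ (Ioi (α ^ p)) (fun x : ℝ => x ^ (1 / p)) :=
      (Real.concaveOn_rpow (by positivity) (by rw [div_le_one hp0]; exact hp)).subset
        (fun x hx => le_trans hαp (le_of_lt hx)) (convex_Ioi _)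
    exact h1.sub (convexOn_const _ (convex_Ioi _))
  have part2c : Tendsto (fun t : ℝ => t ^ (1 / p) - α) atTop atTop := by
    have h1 := tendsto_rpow_atTop (by positivity : (0:ℝ) < 1 / p)
    simpa [sub_eq_add_neg] using tendsto_atTop_add_const_right atTop (-α) h1
  -- Part 3: inequality (2.9)
  have part3 : ∀ t ∈ Ioi (1 : ℝ),
      1 ≤ (1 / g (ω₁ t)) * (((t + α) ^ p) ^ (1 / p) - α) := by
    intro t ht
    have ht1 : (1:ℝ) < t := ht
    have ht0 : (0:ℝ) < t := lt_trans one_pos ht1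
    have hωt : 0 < ω₁ t := hω₁pos t ht0.le
    have htp : 1 < t ^ p := by
      calc (1:ℝ) = 1 ^ p := (Real.one_rpow p).symm
      _ < t ^ p := Real.rpow_lt_rpow zero_le_one ht1 hp0
    have hφt : φ t < ω₁ t := by
      rw [hφval]
      exact div_lt_self hωt htp
    have hg1 : g (ω₁ t) < t := by
      have h1 := hganti (φ t) (hφpos t (mem_Ioi.2 ht0)) (ω₁ t) (mem_Ioi.2 hωt) hφt
      rwa [hgleft t (mem_Ioi.2 ht0)] at h1
    have hgω : 0 < g (ω₁ t) := hgpos _ (mem_Ioi.2 hωt)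
    have hsimp : ((t + α) ^ p) ^ (1 / p) = t + α := by
      rw [one_div, Real.rpow_rpow_inv (by positivity) hp0.ne']
    rw [hsimp, add_sub_cancel_right, one_div_mul_eq_div, le_div_iff₀ hgω, one_mul]
    exact hg1.le
  -- Part 4: monotonicity of (1/t) H⁻¹(t)
  have hsgt1 : ∀ t ∈ Ioo (0:ℝ) 1, 1 < t ^ (-(1/p)) := by
    intro t ht
    obtain ⟨ht0, ht1⟩ := ht
    rw [Real.rpow_neg ht0.le]
    have h2 : t ^ (1/p) < 1 := Real.rpow_lt_one ht0.le ht1 (by positivity)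
    have h3 : 0 < t ^ (1/p) := Real.rpow_pos_of_pos ht0 _
    exact one_lt_inv_iff₀.2 ⟨h3, h2⟩
  have hspos : ∀ t ∈ Ioo (0:ℝ) 1, 0 < t ^ (-(1/p)) - α := by
    intro t ht
    have := hsgt1 t ht
    linarith
  have hFeq : ∀ t ∈ Ioo (0:ℝ) 1,
      (1 - α * t ^ (1/p)) ^ (-p) * ω₁ (t ^ (-(1/p)) - α)
        = ((t ^ (-(1/p)) - α + α) / (t ^ (-(1/p)) - α)) ^ p * ω₁ (t ^ (-(1/p)) - α) := by
    intro t ht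
    obtain ⟨ht0, ht1⟩ := ht
    have hr0 : 0 < t ^ (1/p) := Real.rpow_pos_of_pos ht0 _
    have hinv : t ^ (-(1/p)) = (t ^ (1/p))⁻¹ := Real.rpow_neg ht0.le _
    have hsv0 : 0 < t ^ (-(1/p)) - α := hspos t ⟨ht0, ht1⟩
    have h1 : 1 - α * t ^ (1/p) = (t ^ (-(1/p)) - α) * t ^ (1/p) := by
      rw [hinv]
      field_simp
    have h2 : t ^ (-(1/p)) - α + α = (t ^ (1/p))⁻¹ := by rw [hinv]; ring
    congr 1
    rw [h1, Real.mul_rpow hsv0.le hr0.le,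
        Real.div_rpow (by rw [h2]; positivity) hsv0.le, h2, Real.inv_rpow hr0.le,
        Real.rpow_neg hsv0.le, Real.rpow_neg hr0.le]
    ring
  have part4 : MonotoneOn
      (fun t : ℝ => (1 - α * t ^ (1 / p)) ^ (-p) * ω₁ (t ^ (-(1 / p)) - α))
      (Ioo (0:ℝ) 1) := by
    intro a ha b hb hab
    dsimp only
    rw [hFeq a ha, hFeq b hb]
    have hsa : 0 < a ^ (-(1/p)) - α := hspos a ha
    have hsb : 0 < b ^ (-(1/p)) - α := hspos b hb
    have hba : b ^ (-(1/p)) - α ≤ a ^ (-(1/p)) - α := by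
      have h1 : a ^ (1/p) ≤ b ^ (1/p) := Real.rpow_le_rpow ha.1.le hab (by positivity)
      have h2 : (b ^ (1/p))⁻¹ ≤ (a ^ (1/p))⁻¹ :=
        inv_anti₀ (Real.rpow_pos_of_pos ha.1 _) h1
      rw [← Real.rpow_neg ha.1.le, ← Real.rpow_neg hb.1.le] at h2
      linarith
    have hdiv : (a ^ (-(1/p)) - α + α) / (a ^ (-(1/p)) - α)
        ≤ (b ^ (-(1/p)) - α + α) / (b ^ (-(1/p)) - α) := by
      rw [add_div, add_div, div_self hsa.ne', div_self hsb.ne']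
      have h3 : α / (a ^ (-(1/p)) - α) ≤ α / (b ^ (-(1/p)) - α) :=
        div_le_div_of_nonneg_left hα0 hsb hba
      linarith
    have hω : ω₁ (a ^ (-(1/p)) - α) ≤ ω₁ (b ^ (-(1/p)) - α) := by
      rcases eq_or_lt_of_le hba with h | h
      · rw [h]
      · exact (hω₁anti (mem_Ici.2 hsb.le) (mem_Ici.2 hsa.le) h).le
    have h1 : ((a ^ (-(1/p)) - α + α) / (a ^ (-(1/p)) - α)) ^ p
        ≤ ((b ^ (-(1/p)) - α + α) / (b ^ (-(1/p)) - α)) ^ p :=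
      Real.rpow_le_rpow (by positivity) hdiv hp0.le
    exact mul_le_mul h1 hω (hω₁pos _ (mem_Ici.2 hsa.le)).le (by positivity)
  -- Part 5: the formula for H
  have part5 : ∀ t ∈ Ioi (0 : ℝ),
      1 / Function.invFunOn (fun s : ℝ => s ^ (1 / p) - α) (Ioi (α ^ p)) (1 / (1 / g t)) =
        1 / (g t + α) ^ p := by
    intro t ht
    have hgt : 0 < g t := hgpos t ht
    rw [one_div_one_div]
    have hmem : (g t + α) ^ p ∈ Ioi (α ^ p) :=
      mem_Ioi.2 (Real.rpow_lt_rpow hα0 (by linarith) hp0)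
    have hψ : ((g t + α) ^ p) ^ (1/p) - α = g t := by
      rw [one_div, Real.rpow_rpow_inv (by positivity) hp0.ne']
      ring
    have hinv2 : Function.invFunOn (fun s : ℝ => s ^ (1/p) - α) (Ioi (α ^ p)) (g t)
        = (g t + α) ^ p := by
      have h3 := part2a.injOn.leftInvOn_invFunOn hmem
      rw [hψ] at h3
      exact h3
    rw [hinv2]
  exact ⟨⟨part1a, part1b, part1c⟩, ⟨part2a, part2b, part2c⟩, part3, part4, part5⟩
end
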